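/- Let G be a connected graph, let (L,M) be a cover of G with |L(v)| ≥ deg_G(v) for all v, and suppose it is not the case that (|L(v)| = deg_G(v) for every v and G is a GDP-tree). Then G has an (L,M)-colouring. -/

import Mathlib

/-- The degree of a vertex: the number of its neighbours. -/
noncomputable def deg {V : Type*} (G : SimpleGraph V) (v : V) : ℕ :=
  (G.neighborSet v).ncard
/-- `B` induces a connected subgraph without cut vertices when the deletion of any of
its vertices leaves the induced subgraph preconnected. -/
def NoCutVertex {V : Type*} (G : SimpleGraph V) (B : Set V) : Prop :=
  ∀ v ∈ B, (G.induce (B \ {v})).Preconnected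

/-- A block: a maximal set of vertices inducing a connected subgraph without cut
vertices. -/
def IsBlock {V : Type*} (G : SimpleGraph V) (B : Set V) : Prop :=
  (G.induce B).Connected ∧ NoCutVertex G B ∧
    ∀ B' : Set V, B ⊆ B' → (G.induce B').Connected → NoCutVertex G B' → B' = B

/-- `B` induces a complete subgraph. -/
def IsCompleteSet {V : Type*} (G : SimpleGraph V) (B : Set V) : Prop :=
  ∀ u ∈ B, ∀ v ∈ B, u ≠ v → G.Adj u v

/-- `B` induces a cycle: a connected 2-regular subgraph on at least 3 vertices. -/
noncomputable def IsCycleSet {V : Type*} (G : SimpleGraph V) (B : Set V) : Prop :=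
  (G.induce B).Connected ∧ 3 ≤ B.ncard ∧ ∀ v ∈ B, {u ∈ B | G.Adj v u}.ncard = 2

/-- A GDP-tree: a connected graph all of whose blocks are complete graphs or cycles. -/
noncomputable def IsGDPTree {V : Type*} (G : SimpleGraph V) : Prop :=
  G.Connected ∧ ∀ B : Set V, IsBlock G B → IsCompleteSet G B ∨ IsCycleSet G B
/-- A cover `(L, M)` of a graph `G`: each vertex `v` gets a set `L v` of colours
(colours of distinct vertices are regarded as distinct, being indexed by the vertex),
and each edge `uv` carries a matching `M u v` between `L u` and `L v`. -/
structure Cover {V : Type*} (G : SimpleGraph V) where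
  L : V → Finset ℕ
  M : V → V → ℕ → ℕ → Prop
  symm : ∀ u v a b, M u v a b → M v u b a
  mem : ∀ u v a b, M u v a b → a ∈ L u ∧ b ∈ L v
  matching_right : ∀ u v a b b', M u v a b → M u v a b' → b = b'
  matching_left : ∀ u v a a' b, M u v a b → M u v a' b → a = a'

/-- An `(L, M)`-colouring: each vertex receives a colour from its list so that along
each edge the two chosen colours are not matched. -/
def Cover.IsColouring {V : Type*} {G : SimpleGraph V} (C : Cover G) (φ : V → ℕ) : Prop :=
  (∀ v, φ v ∈ C.L v) ∧ ∀ u v, G.Adj u v → ¬ C.M u v (φ u) (φ v)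

namespace DP
set_option linter.unusedSectionVars false


attribute [local instance 10] Classical.propDecidable

set_option linter.unusedSectionVars false

variable {V : Type*} [Fintype V] (G : SimpleGraph V)

/-- Reachability within a vertex set `A` (the start is not required to lie in `A`). -/
def Reach (A : Set V) : V → V → Prop :=
  Relation.ReflTransGen (fun a b => b ∈ A ∧ G.Adj a b)

variable {G}

lemma Reach.mono {A B : Set V} (h : A ⊆ B) {u v : V} (hr : Reach G A u v) :
    Reach G B u v := by
  induction hr with
  | refl => exact .refl
  | tail _ step ih => exact ih.tail ⟨h step.1, step.2⟩

lemma Reach.mem_of {A : Set V} {u v : V} (hu : u ∈ A) (hr : Reach G A u v) : v ∈ A := by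
  induction hr with
  | refl => exact hu
  | tail _ step _ => exact step.1

lemma Reach.trans {A : Set V} {u v w : V} (h1 : Reach G A u v) (h2 : Reach G A v w) :
    Reach G A u w := Relation.ReflTransGen.trans h1 h2

lemma Reach.symm {A : Set V} {u v : V} (hu : u ∈ A) (hr : Reach G A u v) :
    Reach G A v u := by
  induction hr with
  | refl => exact .refl
  | tail h1 step ih =>
      exact Relation.ReflTransGen.head ⟨Reach.mem_of hu h1, G.adj_symm step.2⟩ ih

lemma Reach.closed {A X : Set V} (hcl : ∀ a ∈ X, ∀ b ∈ A, G.Adj a b → b ∈ X)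
    {u v : V} (hu : u ∈ X) (hr : Reach G A u v) : v ∈ X := by
  induction hr with
  | refl => exact hu
  | tail _ step ih => exact hcl _ ih _ step.1 step.2

lemma Reach.restrict {A X : Set V} (hcl : ∀ a ∈ X, ∀ b ∈ A, G.Adj a b → b ∈ X)
    {u v : V} (hu : u ∈ X) (hr : Reach G A u v) : Reach G X u v := by
  induction hr with
  | refl => exact .refl
  | tail h1 step ih =>
      exact ih.tail ⟨hcl _ (Reach.closed hcl hu h1) _ step.1 step.2, step.2⟩

lemma reachable_induce_iff {A : Set V} {u v : V} (hu : u ∈ A) (hv : v ∈ A) :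
    (G.induce A).Reachable ⟨u, hu⟩ ⟨v, hv⟩ ↔ Reach G A u v := by
  constructor
  · rintro ⟨w⟩
    have : ∀ (x y : A) (_ : (G.induce A).Walk x y), Reach G A x.1 y.1 := by
      intro x y w
      induction w with
      | nil => exact .refl
      | cons h p ih => exact Relation.ReflTransGen.head ⟨Subtype.coe_prop _, h⟩ ih
    exact this _ _ w
  · intro hr
    have : ∀ v (hr : Reach G A u v) (hv : v ∈ A), (G.induce A).Reachable ⟨u, hu⟩ ⟨v, hv⟩ := by
      intro v hr
      induction hr with
      | refl => intro hv; rfl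
      | @tail b c h1 step ih =>
          intro hv
          have hb : b ∈ A := Reach.mem_of hu h1
          have h2 : (G.induce A).Adj ⟨b, hb⟩ ⟨c, hv⟩ := step.2
          exact (ih hb).trans h2.reachable
    exact this v hr hv

/-- Preconnected induced subgraph iff internal reachability. -/
lemma preconnected_induce_iff {A : Set V} :
    (G.induce A).Preconnected ↔ ∀ u ∈ A, ∀ v ∈ A, Reach G A u v := by
  constructor
  · intro h u hu v hv
    exact (reachable_induce_iff hu hv).1 (h ⟨u, hu⟩ ⟨v, hv⟩)
  · intro h x y
    exact (reachable_induce_iff x.2 y.2).2 (h _ x.2 _ y.2)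

lemma connected_induce_iff {A : Set V} :
    (G.induce A).Connected ↔ A.Nonempty ∧ ∀ u ∈ A, ∀ v ∈ A, Reach G A u v := by
  rw [SimpleGraph.connected_iff, preconnected_induce_iff]
  constructor
  · rintro ⟨h1, ⟨x⟩⟩; exact ⟨⟨x.1, x.2⟩, h1⟩
  · rintro ⟨⟨x, hx⟩, h⟩; exact ⟨h, ⟨⟨x, hx⟩⟩⟩


-- greedy part

variable {V : Type*} [Fintype V] {G : SimpleGraph V}

/-- number of colours in `P` forbidden at `u` by coloured vertices `W`. -/
lemma forb_card_le (C : Cover G) (u : V) (P : Finset ℕ) (W : Finset V) (φ : V → ℕ) :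
    (P.filter (fun x => ∃ w ∈ W, G.Adj u w ∧ C.M u w x (φ w))).card ≤
      (W.filter (fun w => G.Adj u w)).card := by
  classical
  set Q := P.filter (fun x => ∃ w ∈ W, G.Adj u w ∧ C.M u w x (φ w)) with hQ
  have key : ∀ x ∈ Q, ∃ w, w ∈ W ∧ G.Adj u w ∧ C.M u w x (φ w) := by
    intro x hx
    rcases Finset.mem_filter.1 hx with ⟨-, w, hw, h1, h2⟩
    exact ⟨w, hw, h1, h2⟩
  set f : ℕ → V := fun x =>
    if h : ∃ w, w ∈ W ∧ G.Adj u w ∧ C.M u w x (φ w) then h.choose else u with hf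
  apply Finset.card_le_card_of_injOn f
  · intro x hx
    have h := key x hx
    rw [hf]; simp only [dif_pos h]
    rcases h.choose_spec with ⟨hw, ha, -⟩
    exact Finset.mem_filter.2 ⟨hw, ha⟩
  · intro x hx y hy hxy
    have hx' := key x hx
    have hy' := key y hy
    have ex : f x = hx'.choose := by rw [hf]; simp only [dif_pos hx']
    have ey : f y = hy'.choose := by rw [hf]; simp only [dif_pos hy']
    rcases hx'.choose_spec with ⟨-, -, hMx⟩
    rcases hy'.choose_spec with ⟨-, -, hMy⟩
    have hcc : hx'.choose = hy'.choose := by rw [← ex, hxy, ey]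
    rw [hcc] at hMx
    exact C.matching_left _ _ _ _ _ hMx hMy

/-- `φ` properly colours `S` with lists `P`. -/
def Proper (C : Cover G) (S : Finset V) (P : V → Finset ℕ) (φ : V → ℕ) : Prop :=
  (∀ v ∈ S, φ v ∈ P v) ∧ ∀ u ∈ S, ∀ w ∈ S, G.Adj u w → ¬ C.M u w (φ u) (φ w)

lemma greedy (C : Cover G) : ∀ (n : ℕ) (S : Finset V), S.card ≤ n → ∀ (P : V → Finset ℕ),
    (∀ T ⊆ S, T.Nonempty → ∃ u ∈ T, ((T.erase u).filter (fun w => G.Adj u w)).card < (P u).card) →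
    ∃ φ, Proper C S P φ := by
  intro n
  induction n with
  | zero =>
      intro S hS P _
      have : S = ∅ := Finset.card_eq_zero.1 (Nat.le_zero.1 hS)
      subst this
      exact ⟨fun _ => 0, fun v hv => absurd hv (Finset.notMem_empty v),
        fun u hu => absurd hu (Finset.notMem_empty u)⟩
  | succ n ih =>
      intro S hS P hpeel
      rcases S.eq_empty_or_nonempty with rfl | hne
      · exact ⟨fun _ => 0, fun v hv => absurd hv (Finset.notMem_empty v),
          fun u hu => absurd hu (Finset.notMem_empty u)⟩
      obtain ⟨u, hu, hcard⟩ := hpeel S (le_refl _) hne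
      set S' := S.erase u with hS'
      have hS'card : S'.card ≤ n := by
        have h1 : S'.card = S.card - 1 := by rw [hS']; exact Finset.card_erase_of_mem hu
        have h2 : 1 ≤ S.card := Finset.card_pos.2 hne
        omega
      obtain ⟨φ', hφ'⟩ := ih S' hS'card P (fun T hT hTne => hpeel T (hT.trans (Finset.erase_subset _ _)) hTne)
      set Forb := (P u).filter (fun x => ∃ w ∈ S', G.Adj u w ∧ C.M u w x (φ' w)) with hForb
      have hFc : Forb.card < (P u).card := by
        calc Forb.card ≤ (S'.filter (fun w => G.Adj u w)).card := forb_card_le C u (P u) S' φ'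
        _ = ((S.erase u).filter (fun w => G.Adj u w)).card := rfl
        _ < (P u).card := hcard
      have hdiff : ((P u) \ Forb).Nonempty := by
        apply Finset.card_pos.1
        have hsub : Forb ⊆ P u := Finset.filter_subset _ _
        have := Finset.card_sdiff_of_subset hsub
        omega
      obtain ⟨x, hx⟩ := hdiff
      rcases Finset.mem_sdiff.1 hx with ⟨hxP, hxF⟩
      refine ⟨Function.update φ' u x, ?_, ?_⟩
      · intro v hv
        rcases eq_or_ne v u with rfl | hvu
        · rwa [Function.update_self]
        · rw [Function.update_of_ne hvu]
          exact hφ'.1 v (Finset.mem_erase.2 ⟨hvu, hv⟩)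
      · intro a ha b hb hab hM
        rcases eq_or_ne a u with rfl | hau
        · rcases eq_or_ne b a with rfl | hba
          · exact G.irrefl hab
          · rw [Function.update_self, Function.update_of_ne hba] at hM
            exact hxF (Finset.mem_filter.2 ⟨hxP, b, Finset.mem_erase.2 ⟨hba, hb⟩, hab, hM⟩)
        · rcases eq_or_ne b u with rfl | hbu
          · rw [Function.update_self, Function.update_of_ne hau] at hM
            have hM' := C.symm _ _ _ _ hM
            exact hxF (Finset.mem_filter.2 ⟨hxP, a, Finset.mem_erase.2 ⟨hau, ha⟩, G.adj_symm hab, hM'⟩)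
          · rw [Function.update_of_ne hau, Function.update_of_ne hbu] at hM
            exact hφ'.2 a (Finset.mem_erase.2 ⟨hau, ha⟩) b (Finset.mem_erase.2 ⟨hbu, hb⟩) hab hM

end DP

namespace DP
set_option linter.unusedSectionVars false
set_option maxHeartbeats 1000000
attribute [local instance 10] Classical.propDecidable
variable {V : Type*} [Fintype V] {G : SimpleGraph V}

/-- degree of `u` into the finite set `S`. -/
noncomputable def dS (G : SimpleGraph V) (S : Finset V) (u : V) : ℕ :=
  (S.filter (fun w => G.Adj u w)).card

lemma exists_boundary {A T : Finset V} {r : V}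
    (hconn : ∀ z ∈ A, Reach G ↑A z r) (hT : T ⊆ A) (hrT : r ∉ T) (hTne : T.Nonempty) :
    ∃ u ∈ T, ∃ w ∈ A, w ∉ T ∧ G.Adj u w := by
  by_contra hno
  push_neg at hno
  obtain ⟨t, ht⟩ := hTne
  have hcl : ∀ a ∈ (↑T : Set V), ∀ b ∈ (↑A : Set V), G.Adj a b → b ∈ (↑T : Set V) := by
    intro a ha b hb hab
    by_contra hbT
    exact hno a ha b hb hbT hab
  have := Reach.closed hcl (by exact_mod_cast ht) (hconn t (hT ht))
  exact hrT (by exact_mod_cast this)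

lemma card_lt_of_out {T A : Finset V} {u w : V} (hTA : T ⊆ A) (hw : w ∈ A)
    (hwT : w ∉ T) (hadj : G.Adj u w) :
    ((T.erase u).filter (fun z => G.Adj u z)).card < dS G A u := by
  apply Finset.card_lt_card
  constructor
  · intro z hz
    rcases Finset.mem_filter.1 hz with ⟨hz1, hz2⟩
    exact Finset.mem_filter.2 ⟨hTA (Finset.mem_of_mem_erase hz1), hz2⟩
  · intro hsub
    have : w ∈ (T.erase u).filter (fun z => G.Adj u z) :=
      hsub (Finset.mem_filter.2 ⟨hw, hadj⟩)
    exact hwT (Finset.mem_of_mem_erase (Finset.mem_filter.1 this).1)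

/-- A bad block inside `S`. -/
def BadIn (G : SimpleGraph V) (S : Finset V) (B : Set V) : Prop :=
  B ⊆ ↑S ∧ (G.induce B).Connected ∧ (∀ v ∈ B, (G.induce (B \ {v})).Preconnected) ∧
  (∀ B' : Set V, B' ⊆ ↑S → B ⊆ B' → (G.induce B').Connected →
     (∀ v ∈ B', (G.induce (B' \ {v})).Preconnected) → B' = B) ∧
  ¬ IsCompleteSet G B ∧ ¬ IsCycleSet G B


lemma dS_split {W S : Finset V} (hWS : W ⊆ S) (z : V) :
    dS G S z = dS G (S \ W) z + (W.filter (fun w => G.Adj z w)).card := by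
  unfold dS
  rw [← Finset.card_union_of_disjoint
    (Finset.disjoint_filter_filter Finset.sdiff_disjoint),
    ← Finset.filter_union, Finset.sdiff_union_of_subset hWS]

lemma shrink_card (C : Cover G) (L' : V → Finset ℕ) {W S : Finset V} (φ₀ : V → ℕ)
    (hWS : W ⊆ S) (z : V) (htz : dS G S z ≤ (L' z).card) :
    dS G (S \ W) z ≤
      ((L' z).filter (fun y => ¬ ∃ w ∈ W, G.Adj z w ∧ C.M z w y (φ₀ w))).card := by
  have h1 := forb_card_le C z (L' z) W φ₀
  have h2 := Finset.card_filter_add_card_filter_not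
    (s := L' z) (p := fun y => ∃ w ∈ W, G.Adj z w ∧ C.M z w y (φ₀ w))
  have h3 := dS_split (G := G) hWS z
  omega

/-- Generic precolouring engine: colour `W` by `φ₀`, greedily extend to `S`
rooted at `a`. -/
lemma lemPre (C : Cover G) (L' : V → Finset ℕ) (S W : Finset V) (φ₀ : V → ℕ) (a : V)
    (hWS : W ⊆ S) (haS : a ∈ S) (haW : a ∉ W)
    (hconn2 : ∀ x ∈ S \ W, Reach G ↑(S \ W) x a)
    (htub : ∀ z ∈ S, dS G S z ≤ (L' z).card)
    (hWproper : ∀ u ∈ W, ∀ w ∈ W, G.Adj u w → ¬ C.M u w (φ₀ u) (φ₀ w))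
    (hWmem : ∀ u ∈ W, φ₀ u ∈ L' u)
    (hroot : dS G (S \ W) a <
      ((L' a).filter (fun y => ¬ ∃ w ∈ W, G.Adj a w ∧ C.M a w y (φ₀ w))).card) :
    ∃ φ, Proper C S L' φ := by
  set P : V → Finset ℕ :=
    fun z => (L' z).filter (fun y => ¬ ∃ w ∈ W, G.Adj z w ∧ C.M z w y (φ₀ w)) with hP
  obtain ⟨ψ, hψ⟩ : ∃ ψ, Proper C (S \ W) P ψ := by
    apply greedy C ((S \ W).card) _ (le_refl _) P
    intro T hT hTne
    by_cases haT : a ∈ T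
    · refine ⟨a, haT, lt_of_le_of_lt ?_ hroot⟩
      unfold dS
      apply Finset.card_le_card
      intro w hw
      rcases Finset.mem_filter.1 hw with ⟨h1, h2⟩
      exact Finset.mem_filter.2 ⟨hT (Finset.mem_of_mem_erase h1), h2⟩
    · obtain ⟨u, hu, w, hw, hwT, hadj⟩ := exists_boundary hconn2 hT haT hTne
      refine ⟨u, hu, lt_of_lt_of_le (card_lt_of_out hT hw hwT hadj) ?_⟩
      exact shrink_card C L' φ₀ hWS u (htub u (Finset.sdiff_subset (hT hu)))
  refine ⟨fun z => if z ∈ W then φ₀ z else ψ z, ?_, ?_⟩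
  · intro z hz
    by_cases hzW : z ∈ W
    · simp only [if_pos hzW]; exact hWmem z hzW
    · simp only [if_neg hzW]
      exact Finset.filter_subset _ _ (hψ.1 z (Finset.mem_sdiff.2 ⟨hz, hzW⟩))
  · intro x hx y hy hxy hM
    dsimp only at hM
    by_cases hxW : x ∈ W <;> by_cases hyW : y ∈ W
    · rw [if_pos hxW, if_pos hyW] at hM
      exact hWproper x hxW y hyW hxy hM
    · rw [if_pos hxW, if_neg hyW] at hM
      have hyP := hψ.1 y (Finset.mem_sdiff.2 ⟨hy, hyW⟩)
      rcases Finset.mem_filter.1 hyP with ⟨-, hno⟩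
      exact hno ⟨x, hxW, G.adj_symm hxy, C.symm _ _ _ _ hM⟩
    · rw [if_neg hxW, if_pos hyW] at hM
      have hxP := hψ.1 x (Finset.mem_sdiff.2 ⟨hx, hxW⟩)
      rcases Finset.mem_filter.1 hxP with ⟨-, hno⟩
      exact hno ⟨y, hyW, hxy, hM⟩
    · rw [if_neg hxW, if_neg hyW] at hM
      exact hψ.2 x (Finset.mem_sdiff.2 ⟨hx, hxW⟩) y (Finset.mem_sdiff.2 ⟨hy, hyW⟩) hxy hM

/-- From a walk between nonadjacent distinct vertices, extract a distance-2
configuration. -/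
lemma dist2 {A : Set V} : ∀ (n : ℕ) (x y : V) (hx : x ∈ A) (hy : y ∈ A)
    (w : (G.induce A).Walk ⟨x, hx⟩ ⟨y, hy⟩), w.length ≤ n → ¬ G.Adj x y → x ≠ y →
    ∃ a ∈ A, ∃ c ∈ A, G.Adj x a ∧ G.Adj a c ∧ ¬ G.Adj x c ∧ x ≠ c := by
  intro n
  induction n with
  | zero =>
      intro x y hx hy w hlen hnadj hne
      cases w with
      | nil => exact absurd rfl hne
      | cons h p => simp at hlen
  | succ n ih =>
      intro x y hx hy w hlen hnadj hne
      cases w with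
      | nil => exact absurd rfl hne
      | @cons _ z _ h p =>
          have hxz : G.Adj x z.1 := h
          cases p with
          | nil => exact absurd hxz hnadj
          | @cons _ z2 _ h2 p2 =>
              have hzz2 : G.Adj z.1 z2.1 := h2
              by_cases hadj2 : G.Adj x z2.1
              · -- skip forward along the walk
                apply ih x y hx hy (SimpleGraph.Walk.cons (by exact hadj2) p2)
                · simp only [SimpleGraph.Walk.length_cons] at hlen
                  show p2.length + 1 ≤ n
                  omega
                · exact hnadj
                · exact hne
              · by_cases hne2 : x = z2.1
                · -- the walk returned to x; recurse on the tail
                  have hz2 : z2 = ⟨x, hx⟩ := by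
                    apply Subtype.ext; exact hne2.symm
                  subst hz2
                  apply ih x y hx hy p2
                  · simp only [SimpleGraph.Walk.length_cons] at hlen
                    omega
                  · exact hnadj
                  · exact hne
                · exact ⟨z.1, z.2, z2.1, z2.2, hxz, hzz2, hadj2, hne2⟩

/-- The 2-connected case; proved later. -/
lemma twoconn (C : Cover G) (S : Finset V) (L' : V → Finset ℕ)
    (hconn : ∀ u ∈ S, ∀ v ∈ S, Reach G ↑S u v)
    (h2c : ∀ v ∈ S, ∀ x ∈ S.erase v, ∀ y ∈ S.erase v, Reach G ↑(S.erase v) x y)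
    (htight : ∀ v ∈ S, (L' v).card = dS G S v)
    (hncp : ¬ IsCompleteSet G ↑S) (hncy : ¬ IsCycleSet G ↑S) :
    ∃ φ, Proper C S L' φ := by
  classical
  obtain ⟨p, hpS, q, hqS, hpq, hnadj⟩ : ∃ p ∈ S, ∃ q ∈ S, p ≠ q ∧ ¬ G.Adj p q := by
    by_contra h
    push_neg at h
    exact hncp (fun u hu v hv huv => h u (by exact_mod_cast hu) v (by exact_mod_cast hv) huv)
  -- saturation dichotomy
  by_cases hsat : ∀ u ∈ S, ∀ w ∈ S, G.Adj u w → ∀ β ∈ L' u, ∃ x ∈ L' w, C.M w u x β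
  swap
  · -- some colour has no match across some edge: easy win
    push_neg at hsat
    obtain ⟨u, hu, w, hw, huw, β, hβ, hno⟩ := hsat
    have hwu : w ≠ u := huw.ne'
    have herase : S \ {u} = S.erase u := by rw [Finset.erase_eq]
    apply lemPre C L' S {u} (fun _ => β) w (Finset.singleton_subset_iff.2 hu) hw
      (by simpa using hwu)
    · intro x hx
      rw [herase] at hx ⊢
      exact h2c u hu x hx w (Finset.mem_erase.2 ⟨hwu, hw⟩)
    · exact fun z hz => le_of_eq (htight z hz).symm
    · intro a ha b hb hab
      rw [Finset.mem_singleton] at ha hb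
      subst ha; subst hb
      exact absurd hab (G.irrefl)
    · intro a ha
      rw [Finset.mem_singleton] at ha
      subst ha; exact hβ
    · have hfull : (L' w).filter
          (fun y => ¬ ∃ w' ∈ ({u} : Finset V), G.Adj w w' ∧ C.M w w' y ((fun _ => β) w')) = L' w := by
        apply Finset.filter_true_of_mem
        intro y hy
        rintro ⟨w', hw', -, hM⟩
        rw [Finset.mem_singleton] at hw'
        subst hw'
        exact hno y hy hM
      rw [hfull]
      have hsplit := dS_split (G := G) (Finset.singleton_subset_iff.2 hu) w
      have : ({u} : Finset V).filter (fun z => G.Adj w z) = {u} := by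
        apply Finset.filter_true_of_mem
        intro z hz
        rw [Finset.mem_singleton] at hz
        subst hz; exact G.adj_symm huw
      rw [this, Finset.card_singleton] at hsplit
      rw [htight w hw]
      omega
  -- every colour is matched along every edge; lists have constant size
  have hinj : ∀ u ∈ S, ∀ w ∈ S, G.Adj u w → (L' u).card ≤ (L' w).card := by
    intro u hu w hw huw
    set f : ℕ → ℕ := fun β => if h : ∃ x ∈ L' w, C.M w u x β then h.choose else 0 with hf
    apply Finset.card_le_card_of_injOn f
    · intro β hβ
      have h := hsat u hu w hw huw β hβ
      rw [hf]; simp only [dif_pos h]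
      exact h.choose_spec.1
    · intro β hβ γ hγ hfg
      have hβ' := hsat u hu w hw huw β hβ
      have hγ' := hsat u hu w hw huw γ hγ
      have e1 : f β = hβ'.choose := by rw [hf]; simp only [dif_pos hβ']
      have e2 : f γ = hγ'.choose := by rw [hf]; simp only [dif_pos hγ']
      have hM1 := hβ'.choose_spec.2
      have hM2 := hγ'.choose_spec.2
      have hcc : hβ'.choose = hγ'.choose := by rw [← e1, hfg, e2]
      rw [hcc] at hM1
      exact C.matching_right _ _ _ _ _ hM1 hM2
  have hcardeq : ∀ u ∈ S, ∀ w ∈ S, G.Adj u w → (L' u).card = (L' w).card :=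
    fun u hu w hw huw => le_antisymm (hinj u hu w hw huw) (hinj w hw u hu (G.adj_symm huw))
  have hconst : ∀ u ∈ S, ∀ w ∈ S, (L' u).card = (L' w).card := by
    intro u hu w hw
    have haux : ∀ w', Reach G ↑S u w' → w' ∈ S → (L' u).card = (L' w').card := by
      intro w' hr
      induction hr with
      | refl => intro _; rfl
      | @tail b c h1 step ih =>
          intro hc
          have hb : b ∈ S := by
            have := Reach.mem_of (show u ∈ (↑S : Set V) by exact_mod_cast hu) h1
            exact_mod_cast this
          exact (ih hb).trans (hcardeq b hb c hc step.2)
    exact haux w (hconn u hu w hw) hw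
  have hdeg : ∀ u ∈ S, ∀ w ∈ S, dS G S u = dS G S w := by
    intro u hu w hw
    rw [← htight u hu, ← htight w hw]
    exact hconst u hu w hw
  -- |S| ≥ 3
  have hS3 : 3 ≤ S.card := by
    by_contra h
    push_neg at h
    have h2 : 2 ≤ S.card := Finset.one_lt_card.2 ⟨p, hpS, q, hqS, hpq⟩
    have hsub : ({p, q} : Finset V) ⊆ S := by
      intro z hz
      rcases Finset.mem_insert.1 hz with rfl | hz
      · exact hpS
      · rw [Finset.mem_singleton] at hz; subst hz; exact hqS
    have hSeq : S = {p, q} := by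
      have := Finset.eq_of_subset_of_card_le hsub (by rw [Finset.card_pair hpq]; omega)
      exact this.symm
    rcases (Relation.ReflTransGen.cases_head (hconn p hpS q hqS)) with heq | ⟨z, ⟨hz, hadj⟩, -⟩
    · exact hpq heq
    · have hzS : z ∈ S := by exact_mod_cast hz
      rw [hSeq] at hzS
      rcases Finset.mem_insert.1 hzS with rfl | hzS
      · exact G.irrefl hadj
      · rw [Finset.mem_singleton] at hzS; subst hzS
        exact hnadj hadj
  -- minimum degree at least one
  have hd1 : 1 ≤ dS G S p := by
    rcases (Relation.ReflTransGen.cases_head (hconn p hpS q hqS)) with heq | ⟨z, ⟨hz, hadj⟩, -⟩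
    · exact absurd heq hpq
    · exact Finset.card_pos.2 ⟨z, Finset.mem_filter.2 ⟨by exact_mod_cast hz, hadj⟩⟩
  have hd2 : dS G S p ≠ 2 := by
    intro h2
    apply hncy
    refine ⟨?_, ?_, ?_⟩
    · rw [connected_induce_iff]
      exact ⟨⟨p, by exact_mod_cast hpS⟩,
        fun u hu v hv => hconn u (by exact_mod_cast hu) v (by exact_mod_cast hv)⟩
    · rw [Set.ncard_coe_finset]; exact hS3
    · intro v hv
      have hvS : v ∈ S := by exact_mod_cast hv
      have hset : {u ∈ (↑S : Set V) | G.Adj v u} = ↑(S.filter (fun u => G.Adj v u)) := by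
        ext u; simp
      rw [hset, Set.ncard_coe_finset]
      exact (hdeg v hvS p hpS).trans h2
  have hdne1 : dS G S p ≠ 1 := by
    intro h1
    obtain ⟨z, hz⟩ := Finset.card_eq_one.1 (h1 ▸ rfl :
      (S.filter (fun w => G.Adj p w)).card = 1)
    have hzS : z ∈ S := by
      have : z ∈ S.filter (fun w => G.Adj p w) := hz ▸ Finset.mem_singleton_self z
      exact (Finset.mem_filter.1 this).1
    have hpz : G.Adj p z := by
      have : z ∈ S.filter (fun w => G.Adj p w) := hz ▸ Finset.mem_singleton_self z
      exact (Finset.mem_filter.1 this).2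
    obtain ⟨y, hyS, hyp, hyz⟩ : ∃ y ∈ S, y ≠ p ∧ y ≠ z := by
      by_contra h
      push_neg at h
      have hsub : S ⊆ {p, z} := by
        intro a ha
        rcases eq_or_ne a p with rfl | h1'
        · exact Finset.mem_insert_self _ _
        · rcases eq_or_ne a z with rfl | h2'
          · exact Finset.mem_insert_of_mem (Finset.mem_singleton_self _)
          · exact absurd h2' (not_not.2 (h a ha h1'))
      have := Finset.card_le_card hsub
      have hle : ({p, z} : Finset V).card ≤ 2 := Finset.card_insert_le _ _ |>.trans (by simp)
      omega
    have hpe : p ∈ S.erase z := Finset.mem_erase.2 ⟨hpz.ne, hpS⟩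
    have hye : y ∈ S.erase z := Finset.mem_erase.2 ⟨hyz, hyS⟩
    rcases (Relation.ReflTransGen.cases_head (h2c z hzS p hpe y hye)) with heq | ⟨z', ⟨hz', hadj⟩, -⟩
    · exact hyp heq.symm
    · have hz'e : z' ∈ S.erase z := by exact_mod_cast hz'
      have hz'f : z' ∈ S.filter (fun w => G.Adj p w) :=
        Finset.mem_filter.2 ⟨Finset.mem_of_mem_erase hz'e, hadj⟩
      rw [hz] at hz'f
      rw [Finset.mem_singleton] at hz'f
      exact (Finset.mem_erase.1 hz'e).1 hz'f
  have hd3 : 3 ≤ dS G S p := by omega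
  -- the good-pair engine
  have hpairwin : ∀ b c a' : V, b ∈ S → c ∈ S → a' ∈ S → b ≠ c → ¬ G.Adj b c →
      G.Adj a' b → G.Adj a' c →
      (∀ x ∈ S \ {b, c}, Reach G ↑(S \ {b, c}) x a') → ∃ φ, Proper C S L' φ := by
    intro b c a' hb hc ha' hbc hnbc hab hac hconn2
    have hab' : a' ≠ b := hab.ne
    have hac' : a' ≠ c := hac.ne
    have hxe : ∃ x, x ∈ L' a' := by
      have : 1 ≤ (L' a').card := by
        rw [htight a' ha']
        have := hdeg a' ha' p hpS
        omega
      exact Finset.card_pos.1 this |>.imp (fun x hx => hx)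
    obtain ⟨x, hxa⟩ := hxe
    obtain ⟨β, hβ, hMβ⟩ := hsat a' ha' b hb hab x hxa
    obtain ⟨γ, hγ, hMγ⟩ := hsat a' ha' c hc hac x hxa
    set φ₀ : V → ℕ := fun z => if z = b then β else γ with hφ₀
    have hWS : ({b, c} : Finset V) ⊆ S := by
      intro z hz
      rcases Finset.mem_insert.1 hz with rfl | hz
      · exact hb
      · rw [Finset.mem_singleton] at hz; subst hz; exact hc
    apply lemPre C L' S {b, c} φ₀ a' hWS ha'
    · intro h
      rcases Finset.mem_insert.1 h with h | h
      · exact hab' h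
      · rw [Finset.mem_singleton] at h; exact hac' h
    · exact hconn2
    · exact fun z hz => le_of_eq (htight z hz).symm
    · intro u hu w hw huw
      rcases Finset.mem_insert.1 hu with rfl | hu
      · rcases Finset.mem_insert.1 hw with rfl | hw
        · exact absurd huw (G.irrefl)
        · rw [Finset.mem_singleton] at hw; subst hw
          exact absurd huw hnbc
      · rw [Finset.mem_singleton] at hu; subst hu
        rcases Finset.mem_insert.1 hw with rfl | hw
        · exact absurd huw (fun h => hnbc (G.adj_symm h))
        · rw [Finset.mem_singleton] at hw; subst hw
          exact absurd huw (G.irrefl)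
    · intro u hu
      rcases Finset.mem_insert.1 hu with rfl | hu
      · simp only [hφ₀, if_pos rfl]; exact hβ
      · rw [Finset.mem_singleton] at hu; subst hu
        simp only [hφ₀, if_neg hbc.symm]; exact hγ
    · -- root slack
      set Q := (L' a').filter
        (fun y => ∃ w ∈ ({b, c} : Finset V), G.Adj a' w ∧ C.M a' w y (φ₀ w)) with hQ
      have hQ1 : Q.card ≤ 1 := by
        apply Finset.card_le_one.2
        have hkey : ∀ y ∈ Q, y = x := by
          intro y hy
          rcases Finset.mem_filter.1 hy with ⟨-, w, hw, -, hM⟩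
          rcases Finset.mem_insert.1 hw with rfl | hw
          · have : φ₀ w = β := by simp [hφ₀]
            rw [this] at hM
            exact C.matching_left _ _ _ _ _ hM (C.symm _ _ _ _ hMβ)
          · rw [Finset.mem_singleton] at hw; subst hw
            have : φ₀ w = γ := by simp [hφ₀, hbc.symm]
            rw [this] at hM
            exact C.matching_left _ _ _ _ _ hM (C.symm _ _ _ _ hMγ)
        intro y hy y' hy'
        rw [hkey y hy, hkey y' hy']
      have hQ2 := Finset.card_filter_add_card_filter_not
        (s := L' a') (p := fun y => ∃ w ∈ ({b, c} : Finset V), G.Adj a' w ∧ C.M a' w y (φ₀ w))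
      have hsplit := dS_split (G := G) hWS a'
      have hpairadj : ({b, c} : Finset V).filter (fun w => G.Adj a' w) = {b, c} := by
        apply Finset.filter_true_of_mem
        intro z hz
        rcases Finset.mem_insert.1 hz with rfl | hz
        · exact hab
        · rw [Finset.mem_singleton] at hz; subst hz; exact hac
      rw [hpairadj, Finset.card_pair hbc] at hsplit
      rw [← hQ] at hQ2
      have ht := htight a' ha'
      omega
  -- the initial distance-2 pair
  obtain ⟨a0, ha0, c0, hc0, hpa0, ha0c0, hnpc0, hpc0⟩ :
      ∃ a0 ∈ (↑S : Set V), ∃ c0 ∈ (↑S : Set V),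
        G.Adj p a0 ∧ G.Adj a0 c0 ∧ ¬ G.Adj p c0 ∧ p ≠ c0 := by
    have hp' : p ∈ (↑S : Set V) := by exact_mod_cast hpS
    have hq' : q ∈ (↑S : Set V) := by exact_mod_cast hqS
    obtain ⟨w⟩ := (reachable_induce_iff hp' hq').2 (hconn p hpS q hqS)
    exact dist2 w.length p q hp' hq' w (le_refl _) hnadj hpq
  by_cases hgood : ∃ b c a' : V, (b ∈ S ∧ c ∈ S ∧ a' ∈ S ∧ b ≠ c ∧ ¬ G.Adj b c ∧
      G.Adj a' b ∧ G.Adj a' c) ∧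
      (∀ x ∈ S \ {b, c}, ∀ y ∈ S \ {b, c}, Reach G ↑(S \ {b, c}) x y)
  · obtain ⟨b, c, a', ⟨hb, hc, ha', hbc, hnbc, hab, hac⟩, hcn⟩ := hgood
    have ha'2 : a' ∈ S \ {b, c} := by
      refine Finset.mem_sdiff.2 ⟨ha', ?_⟩
      intro h
      rcases Finset.mem_insert.1 h with h | h
      · exact hab.ne h
      · rw [Finset.mem_singleton] at h; exact hac.ne h
    exact hpairwin b c a' hb hc ha' hbc hnbc hab hac (fun x hx => hcn x hx a' ha'2)
  · -- no good pair: rigid structure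
    push_neg at hgood
    have hpS' : p ∈ S := hpS
    have ha0S : a0 ∈ S := by exact_mod_cast ha0
    have hc0S : c0 ∈ S := by exact_mod_cast hc0
    -- minimal disconnecting component over all distance-2 pairs
    obtain ⟨x9, hx9, y9, hy9, hnr9⟩ :=
      hgood p c0 a0 ⟨hpS, hc0S, ha0S, hpc0, hnpc0, G.adj_symm hpa0, ha0c0⟩
    set Tri : Finset (V × V × V) := Finset.univ.filter (fun t =>
      (t.1 ∈ S ∧ t.2.1 ∈ S ∧ t.1 ≠ t.2.1 ∧ ¬ G.Adj t.1 t.2.1 ∧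
        (∃ a' ∈ S, G.Adj a' t.1 ∧ G.Adj a' t.2.1)) ∧
      t.2.2 ∈ S \ {t.1, t.2.1} ∧
      ∃ y ∈ S \ {t.1, t.2.1}, ¬ Reach G ↑(S \ {t.1, t.2.1}) t.2.2 y) with hTridef
    have hTri0 : (p, c0, x9) ∈ Tri := by
      rw [hTridef]
      refine Finset.mem_filter.2 ⟨Finset.mem_univ _, ?_⟩
      exact ⟨⟨hpS, hc0S, hpc0, hnpc0, a0, ha0S, G.adj_symm hpa0, ha0c0⟩, hx9, y9, hy9, hnr9⟩
    obtain ⟨⟨b, c, xm⟩, hmem, hmin⟩ := Finset.exists_min_image Tri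
      (fun t => ((S \ {t.1, t.2.1}).filter
        (fun z => Reach G ↑(S \ {t.1, t.2.1}) t.2.2 z)).card) ⟨(p, c0, x9), hTri0⟩
    rw [hTridef] at hmem
    obtain ⟨-, ⟨hbS, hcS, hbc, hnbc, am, hamS, hamb, hamc⟩, hxm2, ym, hym2, hnrm⟩ :=
      Finset.mem_filter.1 hmem
    set S2 := S \ {b, c} with hS2def
    have hpairsub : ({b, c} : Finset V) ⊆ S := by
      intro z hz
      rcases Finset.mem_insert.1 hz with rfl | hz
      · exact hbS
      · rw [Finset.mem_singleton] at hz; subst hz; exact hcS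
    have hS2mem : ∀ z, z ∈ S2 ↔ z ∈ S ∧ z ≠ b ∧ z ≠ c := by
      intro z
      rw [hS2def, Finset.mem_sdiff, Finset.mem_insert, Finset.mem_singleton]
      constructor
      · rintro ⟨h1, h2⟩
        exact ⟨h1, fun h => h2 (Or.inl h), fun h => h2 (Or.inr h)⟩
      · rintro ⟨h1, h2, h3⟩
        exact ⟨h1, fun h => h.elim h2 h3⟩
    have hbS2 : b ∉ S2 := fun h => ((hS2mem b).1 h).2.1 rfl
    have hcS2 : c ∉ S2 := fun h => ((hS2mem c).1 h).2.2 rfl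
    set D := S2.filter (fun z => Reach G ↑S2 xm z) with hDdef
    have hDsub : D ⊆ S2 := Finset.filter_subset _ _
    have hxmD : xm ∈ D := by
      rw [hDdef]; exact Finset.mem_filter.2 ⟨hxm2, .refl⟩
    have hreachD : ∀ z ∈ D, Reach G ↑S2 xm z := fun z hz => (Finset.mem_filter.1 hz).2
    have hclD : ∀ a ∈ D, ∀ w ∈ S2, G.Adj a w → w ∈ D := by
      intro a ha w hw haw
      exact Finset.mem_filter.2 ⟨hw, (hreachD a ha).tail ⟨by exact_mod_cast hw, haw⟩⟩
    have hymD : ym ∉ D := by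
      intro h
      exact hnrm (hreachD ym h)
    have hDD : ∀ z ∈ D, ∀ z' ∈ D, Reach G ↑D z z' := by
      intro z hz z' hz'
      have h1 : Reach G ↑S2 z z' :=
        ((hreachD z hz).symm (by exact_mod_cast hxm2)).trans (hreachD z' hz')
      refine h1.restrict ?_ (by exact_mod_cast hz)
      intro a' ha' w hw haw
      exact_mod_cast hclD a' (by exact_mod_cast ha') w (by exact_mod_cast hw) haw
    -- attachment: every component (with something outside) sees both b and c
    have hattach : ∀ bq cq : V, bq ∈ S → cq ∈ S → (S \ {bq, cq} = S2) →
        ∀ D' : Finset V, D' ⊆ S2 → (∀ a ∈ D', ∀ w ∈ S2, G.Adj a w → w ∈ D') →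
        ∀ x' ∈ D', ∀ y' ∈ S2, y' ∉ D' → ∃ w ∈ D', G.Adj bq w := by
      intro bq cq hbqS hcqS hpq' D' hD'S2 hD'cl x' hx' y' hy' hy'D
      by_contra hno
      push_neg at hno
      have hbqn : ∀ z ∈ S2, z ≠ bq := by
        intro z hz h
        subst h
        have := (hS2mem z).1 hz
        have : z ∈ S \ {z, cq} := by rw [hpq']; exact hz
        rcases Finset.mem_sdiff.1 this with ⟨-, h2⟩
        exact h2 (Finset.mem_insert_self _ _)
      have hcqn : ∀ z ∈ S2, z ≠ cq := by
        intro z hz h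
        subst h
        have : z ∈ S \ {bq, z} := by rw [hpq']; exact hz
        rcases Finset.mem_sdiff.1 this with ⟨-, h2⟩
        exact h2 (Finset.mem_insert_of_mem (Finset.mem_singleton_self _))
      have hcl : ∀ a ∈ (↑D' : Set V), ∀ w ∈ (↑(S.erase cq) : Set V), G.Adj a w →
          w ∈ (↑D' : Set V) := by
        intro a ha w hw haw
        have haD : a ∈ D' := by exact_mod_cast ha
        have hwe : w ∈ S.erase cq := by exact_mod_cast hw
        by_cases hwb : w = bq
        · subst hwb
          exact absurd (G.adj_symm haw) (hno a haD)
        · have hwS2 : w ∈ S2 := by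
            rw [← hpq']
            refine Finset.mem_sdiff.2 ⟨Finset.mem_of_mem_erase hwe, ?_⟩
            intro hh
            rcases Finset.mem_insert.1 hh with h | h
            · exact hwb h
            · rw [Finset.mem_singleton] at h
              exact (Finset.mem_erase.1 hwe).1 h
          exact_mod_cast hD'cl a haD w hwS2 haw
      have hx'e : x' ∈ S.erase cq := Finset.mem_erase.2
        ⟨hcqn x' (hD'S2 hx'), (Finset.mem_sdiff.1 (hD'S2 hx')).1⟩
      have hy'e : y' ∈ S.erase cq := Finset.mem_erase.2
        ⟨hcqn y' hy', (Finset.mem_sdiff.1 hy').1⟩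
      have hr := h2c cq hcqS x' hx'e y' hy'e
      have := Reach.closed hcl (by exact_mod_cast hx') hr
      exact hy'D (by exact_mod_cast this)
    have hpairswap : S \ {c, b} = S2 := by rw [hS2def, Finset.pair_comm]
    -- the reduction: no vertex of D forms a distance-2 pair with b (nor with c)
    have hRED : ∀ b' c' : V, b' ∈ S → c' ∈ S → (S \ {b', c'} = S2) → c' ∉ S2 →
        ∀ wb ∈ D, ¬ G.Adj b' wb → (∃ a'' ∈ S, G.Adj a'' b' ∧ G.Adj a'' wb) → False := by
      rintro b' c' hb'S hc'S hpq' hc'S2 wb hwbD hnadjw ⟨a'', ha''S, ha''b, ha''w⟩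
      have hwbS2 : wb ∈ S2 := hDsub hwbD
      have hwbS : wb ∈ S := (Finset.mem_sdiff.1 hwbS2).1
      have hwb' : wb ∈ S \ {b', c'} := by rw [hpq']; exact hwbS2
      have hb'wb : b' ≠ wb := by
        intro h
        exact (Finset.mem_sdiff.1 hwb').2 (by rw [← h]; exact Finset.mem_insert_self _ _)
      have hc'wb : c' ≠ wb := fun h => hc'S2 (h ▸ hwbS2)
      have hc'b' : c' ≠ b' := by
        intro h
        have hbb : b = b' := by
          by_contra hne
          apply hbS2
          rw [← hpq']
          refine Finset.mem_sdiff.2 ⟨hbS, ?_⟩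
          intro hh
          rcases Finset.mem_insert.1 hh with h2 | h2
          · exact hne h2
          · rw [Finset.mem_singleton] at h2
            exact hne (h2.trans h)
        have hcc : c = b' := by
          by_contra hne
          apply hcS2
          rw [← hpq']
          refine Finset.mem_sdiff.2 ⟨hcS, ?_⟩
          intro hh
          rcases Finset.mem_insert.1 hh with h2 | h2
          · exact hne h2
          · rw [Finset.mem_singleton] at h2
            exact hne (h2.trans h)
        exact hbc (hbb.trans hcc.symm)
      -- disconnection for the pair (b', wb)
      obtain ⟨x', hx', y', hy', hnr'⟩ := hgood b' wb a''
        ⟨hb'S, hwbS, ha''S, hb'wb, hnadjw, ha''b, ha''w⟩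
      set S2' := S \ {b', wb} with hS2'def
      have hS2'mem : ∀ z, z ∈ S2' ↔ z ∈ S ∧ z ≠ b' ∧ z ≠ wb := by
        intro z
        rw [hS2'def, Finset.mem_sdiff, Finset.mem_insert, Finset.mem_singleton]
        constructor
        · rintro ⟨h1, h2⟩
          exact ⟨h1, fun h => h2 (Or.inl h), fun h => h2 (Or.inr h)⟩
        · rintro ⟨h1, h2, h3⟩
          exact ⟨h1, fun h => h.elim h2 h3⟩
      have hS2toS2' : ∀ z ∈ S2, z ≠ wb → z ∈ S2' := by
        intro z hz hzwb
        refine (hS2'mem z).2 ⟨(Finset.mem_sdiff.1 hz).1, ?_, hzwb⟩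
        intro h
        have hzz : z ∈ S \ {b', c'} := by rw [hpq']; exact hz
        exact (Finset.mem_sdiff.1 hzz).2 (by rw [h]; exact Finset.mem_insert_self _ _)
      have hc'S2' : c' ∈ S2' := (hS2'mem c').2 ⟨hc'S, hc'b', hc'wb⟩
      -- every vertex outside D reaches c' in S2'
      have hRc : ∀ z ∈ S2', z ∉ D → Reach G ↑S2' z c' := by
        intro z hz hzD
        by_cases hzc' : z = c'
        · subst hzc'; exact .refl
        have hzS2 : z ∈ S2 := by
          rw [← hpq']
          refine Finset.mem_sdiff.2 ⟨((hS2'mem z).1 hz).1, ?_⟩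
          intro hh
          rcases Finset.mem_insert.1 hh with h2 | h2
          · exact ((hS2'mem z).1 hz).2.1 h2
          · rw [Finset.mem_singleton] at h2; exact hzc' h2
        set Cz := S2.filter (fun w => Reach G ↑S2 z w) with hCzdef
        have hCzS2 : Cz ⊆ S2 := Finset.filter_subset _ _
        have hzCz : z ∈ Cz := Finset.mem_filter.2 ⟨hzS2, .refl⟩
        have hreachz : ∀ w ∈ Cz, Reach G ↑S2 z w := fun w hw => (Finset.mem_filter.1 hw).2
        have hclz : ∀ a ∈ Cz, ∀ w ∈ S2, G.Adj a w → w ∈ Cz := by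
          intro a ha w hw haw
          exact Finset.mem_filter.2 ⟨hw, (hreachz a ha).tail ⟨by exact_mod_cast hw, haw⟩⟩
        have hCzD : ∀ w ∈ Cz, w ∉ D := by
          intro w hw hwD
          apply hzD
          refine Finset.mem_filter.2 ⟨hzS2, ?_⟩
          exact ((hreachz w hw).trans ((hreachD w hwD).symm
            (by exact_mod_cast hxm2))).symm (by exact_mod_cast hzS2)
        have hxmCz : xm ∉ Cz := fun h => hCzD xm h hxmD
        obtain ⟨wc, hwcCz, hwcadj⟩ := hattach c' b' hc'S hb'S
          (by rw [← hpq', Finset.pair_comm]) Cz hCzS2 hclz z hzCz xm hxm2 hxmCz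
        have hCzS2' : Cz ⊆ S2' := by
          intro a ha
          exact hS2toS2' a (hCzS2 ha) (fun h => hCzD a ha (h ▸ hwbD))
        have hr1 : Reach G ↑Cz z wc := by
          refine (hreachz wc hwcCz).restrict ?_ (by exact_mod_cast hzCz)
          intro a' ha' w hw haw
          exact_mod_cast hclz a' (by exact_mod_cast ha') w (by exact_mod_cast hw) haw
        refine (hr1.mono (by intro a' ha'; exact_mod_cast hCzS2' (by exact_mod_cast ha'))).tail
          ⟨by exact_mod_cast hc'S2', G.adj_symm hwcadj⟩
      -- one of x', y' fails to reach c'; its component is a proper sub-part of D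
      have hkey : ∃ z', z' ∈ S2' ∧ ¬ Reach G ↑S2' z' c' ∧
          ∃ y'', y'' ∈ S2' ∧ ¬ Reach G ↑S2' z' y'' := by
        by_cases h1 : Reach G ↑S2' x' c'
        · by_cases h2 : Reach G ↑S2' y' c'
          · exact absurd (h1.trans (h2.symm (by exact_mod_cast hy'))) hnr'
          · refine ⟨y', hy', h2, x', hx', ?_⟩
            intro hr
            exact hnr' (hr.symm (by exact_mod_cast hy'))
        · exact ⟨x', hx', h1, y', hy', hnr'⟩
      obtain ⟨z', hz'S2', hz'nc, y'', hy''S2', hnr''⟩ := hkey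
      have hz'D : z' ∈ D := by
        by_contra h
        exact hz'nc (hRc z' hz'S2' h)
      have hz'wb : z' ≠ wb := ((hS2'mem z').1 hz'S2').2.2
      -- the component of z' in S2' sits inside D.erase wb
      set K := S2'.filter (fun w => Reach G ↑S2' z' w) with hKdef
      have hKsub : ∀ w ∈ K, w ∈ D ∧ w ≠ wb := by
        intro w hw
        rcases Finset.mem_filter.1 hw with ⟨hwS2', hrw⟩
        constructor
        · by_contra hwD
          exact hz'nc (hrw.trans (hRc w hwS2' hwD))
        · exact ((hS2'mem w).1 hwS2').2.2
      have hKcard : K.card < D.card := by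
        have hsub : K ⊆ D.erase wb := by
          intro w hw
          exact Finset.mem_erase.2 ⟨(hKsub w hw).2, (hKsub w hw).1⟩
        calc K.card ≤ (D.erase wb).card := Finset.card_le_card hsub
          _ < D.card := by
              rw [Finset.card_erase_of_mem hwbD]
              have : 1 ≤ D.card := Finset.card_pos.2 ⟨xm, hxmD⟩
              omega
      -- contradiction with minimality
      have hTri' : ((b', wb, z') : V × V × V) ∈ Tri := by
        rw [hTridef]
        refine Finset.mem_filter.2 ⟨Finset.mem_univ _, ?_⟩
        refine ⟨⟨hb'S, hwbS, hb'wb, hnadjw, a'', ha''S, ha''b, ha''w⟩, ?_, ?_⟩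
        · exact hz'S2'
        · exact ⟨y'', hy''S2', hnr''⟩
      have hfin : D.card ≤ K.card := hmin (b', wb, z') hTri'
      omega
    -- D is fully adjacent to b
    obtain ⟨w0b, hw0bD, hw0badj⟩ : ∃ w ∈ D, G.Adj b w :=
      hattach b c hbS hcS hS2def.symm D hDsub hclD xm hxmD ym hym2 hymD
    obtain ⟨w0c, hw0cD, hw0cadj⟩ : ∃ w ∈ D, G.Adj c w :=
      hattach c b hcS hbS hpairswap D hDsub hclD xm hxmD ym hym2 hymD
    have hDadjb : ∀ w ∈ D, G.Adj b w := by
      intro w hwD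
      by_contra hnadjbw
      have hbw : b ≠ w := fun h => hbS2 (h ▸ hDsub hwD)
      set A : Set V := insert b ↑D with hAdef
      have hbA : b ∈ A := Set.mem_insert _ _
      have hwA : w ∈ A := Set.mem_insert_of_mem _ (by exact_mod_cast hwD)
      have hr : Reach G A b w := by
        refine Relation.ReflTransGen.head ⟨?_, hw0badj⟩ ?_
        · exact Set.mem_insert_of_mem _ (by exact_mod_cast hw0bD)
        · exact (hDD w0b hw0bD w hwD).mono (fun a' ha' => Set.mem_insert_of_mem _ ha')
      obtain ⟨wk⟩ := (reachable_induce_iff hbA hwA).2 hr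
      obtain ⟨a', ha'A, c', hc'A, h1, h2, h3, h4⟩ :=
        dist2 wk.length b w hbA hwA wk (le_refl _) hnadjbw hbw
      have ha'S : a' ∈ S := by
        rcases Set.mem_insert_iff.1 ha'A with rfl | h
        · exact hbS
        · exact (Finset.mem_sdiff.1 (hDsub (by exact_mod_cast h))).1
      have hc'D : c' ∈ D := by
        rcases Set.mem_insert_iff.1 hc'A with rfl | h
        · exact absurd rfl h4
        · exact_mod_cast h
      exact hRED b c hbS hcS hS2def.symm hcS2 c' hc'D h3 ⟨a', ha'S, G.adj_symm h1, h2⟩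
    have hDadjc : ∀ w ∈ D, G.Adj c w := by
      intro w hwD
      by_contra hnadjcw
      have hcw : c ≠ w := fun h => hcS2 (h ▸ hDsub hwD)
      set A : Set V := insert c ↑D with hAdef
      have hcA : c ∈ A := Set.mem_insert _ _
      have hwA : w ∈ A := Set.mem_insert_of_mem _ (by exact_mod_cast hwD)
      have hr : Reach G A c w := by
        refine Relation.ReflTransGen.head ⟨?_, hw0cadj⟩ ?_
        · exact Set.mem_insert_of_mem _ (by exact_mod_cast hw0cD)
        · exact (hDD w0c hw0cD w hwD).mono (fun a' ha' => Set.mem_insert_of_mem _ ha')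
      obtain ⟨wk⟩ := (reachable_induce_iff hcA hwA).2 hr
      obtain ⟨a', ha'A, c', hc'A, h1, h2, h3, h4⟩ :=
        dist2 wk.length c w hcA hwA wk (le_refl _) hnadjcw hcw
      have ha'S : a' ∈ S := by
        rcases Set.mem_insert_iff.1 ha'A with rfl | h
        · exact hcS
        · exact (Finset.mem_sdiff.1 (hDsub (by exact_mod_cast h))).1
      have hc'D : c' ∈ D := by
        rcases Set.mem_insert_iff.1 hc'A with rfl | h
        · exact absurd rfl h4
        · exact_mod_cast h
      exact hRED c b hcS hbS hpairswap hbS2 c' hc'D h3 ⟨a', ha'S, G.adj_symm h1, h2⟩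
    -- routes to b through the rest
    set Ob : Set V := insert b ↑(S2 \ D) with hObdef
    have hOreachb : ∀ z ∈ S2, z ∉ D → Reach G Ob z b := by
      intro z hz hzD
      set Cz := S2.filter (fun w => Reach G ↑S2 z w) with hCzdef
      have hCzS2 : Cz ⊆ S2 := Finset.filter_subset _ _
      have hzCz : z ∈ Cz := Finset.mem_filter.2 ⟨hz, .refl⟩
      have hreachz : ∀ w ∈ Cz, Reach G ↑S2 z w := fun w hw => (Finset.mem_filter.1 hw).2
      have hclz : ∀ a ∈ Cz, ∀ w ∈ S2, G.Adj a w → w ∈ Cz := by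
        intro a ha w hw haw
        exact Finset.mem_filter.2 ⟨hw, (hreachz a ha).tail ⟨by exact_mod_cast hw, haw⟩⟩
      have hCzD : ∀ w ∈ Cz, w ∉ D := by
        intro w hw hwD
        apply hzD
        refine Finset.mem_filter.2 ⟨hz, ?_⟩
        exact ((hreachz w hw).trans ((hreachD w hwD).symm
          (by exact_mod_cast hxm2))).symm (by exact_mod_cast hz)
      have hxmCz : xm ∉ Cz := fun h => hCzD xm h hxmD
      obtain ⟨wz, hwzCz, hwzadj⟩ :=
        hattach b c hbS hcS hS2def.symm Cz hCzS2 hclz z hzCz xm hxm2 hxmCz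
      have hCzOb : ↑Cz ⊆ Ob := by
        intro a ha
        exact Set.mem_insert_of_mem _ (by
          exact_mod_cast Finset.mem_sdiff.2 ⟨hCzS2 (by exact_mod_cast ha),
            hCzD a (by exact_mod_cast ha)⟩)
      have hr1 : Reach G ↑Cz z wz := by
        refine (hreachz wz hwzCz).restrict ?_ (by exact_mod_cast hzCz)
        intro a' ha' w hw haw
        exact_mod_cast hclz a' (by exact_mod_cast ha') w (by exact_mod_cast hw) haw
      exact (hr1.mono hCzOb).tail ⟨Set.mem_insert _ _, G.adj_symm hwzadj⟩
    have hcreachb : Reach G (insert c Ob) c b := by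
      set Cy := S2.filter (fun w => Reach G ↑S2 ym w) with hCydef
      have hCyS2 : Cy ⊆ S2 := Finset.filter_subset _ _
      have hyCy : ym ∈ Cy := Finset.mem_filter.2 ⟨hym2, .refl⟩
      have hreachy : ∀ w ∈ Cy, Reach G ↑S2 ym w := fun w hw => (Finset.mem_filter.1 hw).2
      have hcly : ∀ a ∈ Cy, ∀ w ∈ S2, G.Adj a w → w ∈ Cy := by
        intro a ha w hw haw
        exact Finset.mem_filter.2 ⟨hw, (hreachy a ha).tail ⟨by exact_mod_cast hw, haw⟩⟩
      have hCyD : ∀ w ∈ Cy, w ∉ D := by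
        intro w hw hwD
        apply hymD
        refine Finset.mem_filter.2 ⟨hym2, ?_⟩
        exact ((hreachy w hw).trans ((hreachD w hwD).symm
          (by exact_mod_cast hxm2))).symm (by exact_mod_cast hym2)
      have hxmCy : xm ∉ Cy := fun h => hCyD xm h hxmD
      obtain ⟨wcy, hwcyCy, hwcyadj⟩ :=
        hattach c b hcS hbS hpairswap Cy hCyS2 hcly ym hyCy xm hxm2 hxmCy
      obtain ⟨wby, hwbyCy, hwbyadj⟩ :=
        hattach b c hbS hcS hS2def.symm Cy hCyS2 hcly ym hyCy xm hxm2 hxmCy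
      have hCyOb : ↑Cy ⊆ (insert c Ob : Set V) := by
        intro a ha
        refine Set.mem_insert_of_mem _ (Set.mem_insert_of_mem _ ?_)
        exact_mod_cast Finset.mem_sdiff.2 ⟨hCyS2 (by exact_mod_cast ha),
          hCyD a (by exact_mod_cast ha)⟩
      have hr1 : Reach G ↑Cy wcy wby := by
        have h2' : Reach G ↑S2 wcy wby :=
          ((hreachy wcy hwcyCy).symm (by exact_mod_cast hym2)).trans (hreachy wby hwbyCy)
        refine h2'.restrict ?_ (by exact_mod_cast hwcyCy)
        intro a' ha' w hw haw
        exact_mod_cast hcly a' (by exact_mod_cast ha') w (by exact_mod_cast hw) haw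
      refine Relation.ReflTransGen.head ⟨hCyOb (by exact_mod_cast hwcyCy), hwcyadj⟩ ?_
      exact ((hr1.mono hCyOb).tail
        ⟨Set.mem_insert_of_mem _ (Set.mem_insert _ _), G.adj_symm hwbyadj⟩)
    -- D is a clique
    have hDclique : ∀ w ∈ D, ∀ w' ∈ D, w ≠ w' → G.Adj w w' := by
      intro ww hww ww' hww' hne
      by_contra hnadj'
      have hwwS : ww ∈ S := (Finset.mem_sdiff.1 (hDsub hww)).1
      have hww'S : ww' ∈ S := (Finset.mem_sdiff.1 (hDsub hww')).1
      obtain ⟨x', hx', y', hy', hnr'⟩ := hgood ww ww' b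
        ⟨hwwS, hww'S, hbS, hne, hnadj', hDadjb ww hww, hDadjb ww' hww'⟩
      set T := S \ {ww, ww'} with hTdef
      have hmemT : ∀ z, z ∈ T ↔ z ∈ S ∧ z ≠ ww ∧ z ≠ ww' := by
        intro z
        rw [hTdef, Finset.mem_sdiff, Finset.mem_insert, Finset.mem_singleton]
        constructor
        · rintro ⟨h1', h2'⟩
          exact ⟨h1', fun h => h2' (Or.inl h), fun h => h2' (Or.inr h)⟩
        · rintro ⟨h1', h2', h3'⟩
          exact ⟨h1', fun h => h.elim h2' h3'⟩
      have hbT : b ∈ T := (hmemT b).2 ⟨hbS, fun h => hbS2 (h ▸ hDsub hww),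
        fun h => hbS2 (h ▸ hDsub hww')⟩
      have hcT : c ∈ T := (hmemT c).2 ⟨hcS, fun h => hcS2 (h ▸ hDsub hww),
        fun h => hcS2 (h ▸ hDsub hww')⟩
      have hObT : Ob ⊆ ↑T := by
        intro z hz
        rcases Set.mem_insert_iff.1 hz with rfl | hz
        · exact_mod_cast hbT
        · have hz' : z ∈ S2 \ D := by exact_mod_cast hz
          rcases Finset.mem_sdiff.1 hz' with ⟨hz1, hz2⟩
          refine ?_
          have : z ∈ T := (hmemT z).2 ⟨(Finset.mem_sdiff.1 hz1).1,
            fun h => hz2 (h ▸ hww), fun h => hz2 (h ▸ hww')⟩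
          exact_mod_cast this
      have hallb : ∀ z ∈ T, Reach G ↑T z b := by
        intro z hzT
        rcases (hmemT z).1 hzT with ⟨hzS, hzww, hzww'⟩
        by_cases hzb : z = b
        · subst hzb; exact .refl
        by_cases hzc : z = c
        · subst hzc
          refine hcreachb.mono ?_
          intro a ha
          rcases Set.mem_insert_iff.1 ha with rfl | ha
          · exact_mod_cast hcT
          · exact hObT ha
        have hzS2 : z ∈ S2 := (hS2mem z).2 ⟨hzS, hzb, hzc⟩
        by_cases hzD : z ∈ D
        · exact Relation.ReflTransGen.single ⟨by exact_mod_cast hbT, G.adj_symm (hDadjb z hzD)⟩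
        · exact (hOreachb z hzS2 hzD).mono hObT
      exact hnr' ((hallb x' hx').trans ((hallb y' hy').symm (by exact_mod_cast hy')))
    -- neighbourhoods of vertices of D
    have hdall : ∀ u ∈ S, dS G S u = dS G S p := fun u hu => hdeg u hu p hpS
    have hDnbhd : ∀ w ∈ D, S.filter (fun z => G.Adj w z) = insert b (insert c (D.erase w)) := by
      intro w hw
      apply Finset.ext
      intro z
      simp only [Finset.mem_filter, Finset.mem_insert, Finset.mem_erase]
      constructor
      · rintro ⟨hzS, hzadj⟩
        by_cases hzb : z = b
        · exact Or.inl hzb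
        by_cases hzc : z = c
        · exact Or.inr (Or.inl hzc)
        have hzS2 : z ∈ S2 := (hS2mem z).2 ⟨hzS, hzb, hzc⟩
        refine Or.inr (Or.inr ⟨?_, hclD w hw z hzS2 hzadj⟩)
        intro h
        exact G.irrefl (h ▸ hzadj)
      · rintro (rfl | rfl | ⟨hzw, hzD⟩)
        · exact ⟨hbS, G.adj_symm (hDadjb w hw)⟩
        · exact ⟨hcS, G.adj_symm (hDadjc w hw)⟩
        · exact ⟨(Finset.mem_sdiff.1 (hDsub hzD)).1, hDclique w hw z hzD (Ne.symm hzw)⟩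
    have hw0bS : w0b ∈ S := (Finset.mem_sdiff.1 (hDsub hw0bD)).1
    have hbD : b ∉ D := fun h => hbS2 (hDsub h)
    have hcD : c ∉ D := fun h => hcS2 (hDsub h)
    have hDcard : D.card + 1 = dS G S p := by
      have h1 := hDnbhd w0b hw0bD
      have h2 : dS G S w0b = (insert b (insert c (D.erase w0b))).card := by
        unfold dS; rw [h1]
      have h3 : (insert b (insert c (D.erase w0b))).card = D.card + 1 := by
        rw [Finset.card_insert_of_notMem, Finset.card_insert_of_notMem,
          Finset.card_erase_of_mem hw0bD]
        · have : 1 ≤ D.card := Finset.card_pos.2 ⟨xm, hxmD⟩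
          omega
        · intro h
          exact hcD (Finset.mem_of_mem_erase h)
        · intro h
          rcases Finset.mem_insert.1 h with h | h
          · exact hbc h
          · exact hbD (Finset.mem_of_mem_erase h)
      rw [← hdall w0b hw0bS, h2, h3]
    -- b has a unique neighbour outside D, and so does c
    have hDsubb : D ⊆ S.filter (fun z => G.Adj b z) := fun w hw =>
      Finset.mem_filter.2 ⟨(Finset.mem_sdiff.1 (hDsub hw)).1, hDadjb w hw⟩
    have hDsubc : D ⊆ S.filter (fun z => G.Adj c z) := fun w hw =>
      Finset.mem_filter.2 ⟨(Finset.mem_sdiff.1 (hDsub hw)).1, hDadjc w hw⟩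
    have hbfc : (S.filter (fun z => G.Adj b z)).card = dS G S p := hdall b hbS
    have hcfc : (S.filter (fun z => G.Adj c z)).card = dS G S p := hdall c hcS
    obtain ⟨u₀, hu₀⟩ : ∃ u₀, (S.filter (fun z => G.Adj b z)) \ D = {u₀} := by
      apply Finset.card_eq_one.1
      rw [Finset.card_sdiff_of_subset hDsubb, hbfc]
      omega
    obtain ⟨u₁, hu₁⟩ : ∃ u₁, (S.filter (fun z => G.Adj c z)) \ D = {u₁} := by
      apply Finset.card_eq_one.1
      rw [Finset.card_sdiff_of_subset hDsubc, hcfc]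
      omega
    have hu₀m : u₀ ∈ (S.filter (fun z => G.Adj b z)) \ D := by
      rw [hu₀]; exact Finset.mem_singleton_self _
    have hu₁m : u₁ ∈ (S.filter (fun z => G.Adj c z)) \ D := by
      rw [hu₁]; exact Finset.mem_singleton_self _
    have hu₀S : u₀ ∈ S := (Finset.mem_filter.1 (Finset.mem_sdiff.1 hu₀m).1).1
    have hu₁S : u₁ ∈ S := (Finset.mem_filter.1 (Finset.mem_sdiff.1 hu₁m).1).1
    have hbu₀ : G.Adj b u₀ := (Finset.mem_filter.1 (Finset.mem_sdiff.1 hu₀m).1).2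
    have hcu₁ : G.Adj c u₁ := (Finset.mem_filter.1 (Finset.mem_sdiff.1 hu₁m).1).2
    have hu₀D : u₀ ∉ D := (Finset.mem_sdiff.1 hu₀m).2
    have hu₁D : u₁ ∉ D := (Finset.mem_sdiff.1 hu₁m).2
    have huniq₀ : ∀ z ∈ S, G.Adj b z → z ∉ D → z = u₀ := by
      intro z hz hadj hzD
      have : z ∈ (S.filter (fun z => G.Adj b z)) \ D :=
        Finset.mem_sdiff.2 ⟨Finset.mem_filter.2 ⟨hz, hadj⟩, hzD⟩
      rw [hu₀] at this
      exact Finset.mem_singleton.1 this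
    have huniq₁ : ∀ z ∈ S, G.Adj c z → z ∉ D → z = u₁ := by
      intro z hz hadj hzD
      have : z ∈ (S.filter (fun z => G.Adj c z)) \ D :=
        Finset.mem_sdiff.2 ⟨Finset.mem_filter.2 ⟨hz, hadj⟩, hzD⟩
      rw [hu₁] at this
      exact Finset.mem_singleton.1 this
    have hu₀S2 : u₀ ∈ S2 := (hS2mem u₀).2 ⟨hu₀S, fun h => G.irrefl (h ▸ hbu₀),
      fun h => hnbc (h ▸ hbu₀)⟩
    have hu₁S2 : u₁ ∈ S2 := (hS2mem u₁).2 ⟨hu₁S, fun h => hnbc (G.adj_symm (h ▸ hcu₁)),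
      fun h => G.irrefl (h ▸ hcu₁)⟩
    set O := S2 \ D with hOdef
    have hu₀O : u₀ ∈ O := Finset.mem_sdiff.2 ⟨hu₀S2, hu₀D⟩
    have hu₁O : u₁ ∈ O := Finset.mem_sdiff.2 ⟨hu₁S2, hu₁D⟩
    have hOS2 : O ⊆ S2 := Finset.sdiff_subset
    have hOS : O ⊆ S := hOS2.trans (Finset.sdiff_subset)
    have hOD : ∀ z ∈ O, z ∉ D := fun z hz => (Finset.mem_sdiff.1 hz).2
    have hbO : b ∉ O := fun h => hbS2 (hOS2 h)
    have hcO : c ∉ O := fun h => hcS2 (hOS2 h)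
    have hno_OD : ∀ z ∈ O, ∀ w ∈ D, ¬ G.Adj z w := by
      intro z hz w hw hadj
      exact hOD z hz (hclD w hw z (hOS2 hz) (G.adj_symm hadj))
    have hOcl : ∀ a ∈ O, ∀ w ∈ S2, G.Adj a w → w ∈ O := by
      intro a ha w hw haw
      refine Finset.mem_sdiff.2 ⟨hw, ?_⟩
      intro hwD
      exact hno_OD a ha w hwD haw
    have hOcomp : ∀ z ∈ O, Reach G ↑S2 u₀ z := by
      intro z hz
      set Cz := S2.filter (fun w => Reach G ↑S2 z w) with hCzdef
      have hCzS2 : Cz ⊆ S2 := Finset.filter_subset _ _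
      have hzCz : z ∈ Cz := Finset.mem_filter.2 ⟨hOS2 hz, .refl⟩
      have hreachz : ∀ w ∈ Cz, Reach G ↑S2 z w := fun w hw => (Finset.mem_filter.1 hw).2
      have hclz : ∀ a ∈ Cz, ∀ w ∈ S2, G.Adj a w → w ∈ Cz := by
        intro a ha w hw haw
        exact Finset.mem_filter.2 ⟨hw, (hreachz a ha).tail ⟨by exact_mod_cast hw, haw⟩⟩
      have hCzD : ∀ w ∈ Cz, w ∉ D := by
        intro w hw hwD
        apply hOD z hz
        refine Finset.mem_filter.2 ⟨hOS2 hz, ?_⟩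
        exact ((hreachz w hw).trans ((hreachD w hwD).symm
          (by exact_mod_cast hxm2))).symm (by exact_mod_cast (hOS2 hz))
      have hxmCz : xm ∉ Cz := fun h => hCzD xm h hxmD
      obtain ⟨wz, hwzCz, hwzadj⟩ :=
        hattach b c hbS hcS hS2def.symm Cz hCzS2 hclz z hzCz xm hxm2 hxmCz
      have hwzu₀ : wz = u₀ := huniq₀ wz ((Finset.mem_sdiff.1 (hCzS2 hwzCz)).1)
        hwzadj (hCzD wz hwzCz)
      have : Reach G ↑S2 z u₀ := hwzu₀ ▸ hreachz wz hwzCz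
      exact this.symm (by exact_mod_cast hOS2 hz)
    have hOreach : ∀ z ∈ O, ∀ z' ∈ O, Reach G ↑O z z' := by
      intro z hz z' hz'
      have h1 : Reach G ↑S2 z z' :=
        ((hOcomp z hz).symm (by exact_mod_cast hu₀S2)).trans (hOcomp z' hz')
      refine h1.restrict ?_ (by exact_mod_cast hz)
      intro a' ha' w hw haw
      exact_mod_cast hOcl a' (by exact_mod_cast ha') w (by exact_mod_cast hw) haw
    have hcases : ∀ z ∈ S, z = b ∨ z = c ∨ z ∈ D ∨ z ∈ O := by
      intro z hz
      by_cases hzb : z = b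
      · exact Or.inl hzb
      by_cases hzc : z = c
      · exact Or.inr (Or.inl hzc)
      have hzS2 : z ∈ S2 := (hS2mem z).2 ⟨hz, hzb, hzc⟩
      by_cases hzD : z ∈ D
      · exact Or.inr (Or.inr (Or.inl hzD))
      · exact Or.inr (Or.inr (Or.inr (Finset.mem_sdiff.2 ⟨hzS2, hzD⟩)))
    -- ENDGAME: explicit colouring
    obtain ⟨ψO, hψO⟩ : ∃ ψ, Proper C O L' ψ := by
      apply greedy C O.card O (le_refl _) L'
      intro T hT hTne
      by_cases hu₀T : u₀ ∈ T
      · refine ⟨u₀, hu₀T, ?_⟩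
        have hsub : (T.erase u₀).filter (fun w => G.Adj u₀ w) ⊆
            (S.filter (fun w => G.Adj u₀ w)).erase b := by
          intro z hz
          rcases Finset.mem_filter.1 hz with ⟨hz1, hz2⟩
          have hzO : z ∈ O := hT (Finset.mem_of_mem_erase hz1)
          exact Finset.mem_erase.2 ⟨fun h => hbO (h ▸ hzO),
            Finset.mem_filter.2 ⟨hOS hzO, hz2⟩⟩
        have hble : ((S.filter (fun w => G.Adj u₀ w)).erase b).card =
            (S.filter (fun w => G.Adj u₀ w)).card - 1 :=
          Finset.card_erase_of_mem (Finset.mem_filter.2 ⟨hbS, G.adj_symm hbu₀⟩)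
        have h1 := Finset.card_le_card hsub
        have hdSu : dS G S u₀ = (S.filter (fun w => G.Adj u₀ w)).card := rfl
        have hdu : dS G S u₀ = dS G S p := hdall u₀ hu₀S
        rw [htight u₀ hu₀S]
        omega
      · obtain ⟨u', hu', w', hw', hw'T, hadj'⟩ :=
          exists_boundary (fun z hz => hOreach z hz u₀ hu₀O) hT hu₀T hTne
        refine ⟨u', hu', lt_of_lt_of_le (card_lt_of_out hT hw' hw'T hadj') ?_⟩
        rw [htight u' (hOS (hT hu'))]
        exact Finset.card_le_card (Finset.filter_subset_filter _ hOS)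
    obtain ⟨x₀, hx₀L, hMx₀⟩ := hsat u₀ hu₀S b hbS (G.adj_symm hbu₀) (ψO u₀) (hψO.1 u₀ hu₀O)
    have hxmS : xm ∈ S := (Finset.mem_sdiff.1 hxm2).1
    obtain ⟨β₁, hβ₁L, hMβ₁⟩ := hsat b hbS xm hxmS (hDadjb xm hxmD) x₀ hx₀L
    obtain ⟨y₀, hy₀L, hMy₀⟩ := hsat xm hxmS c hcS (G.adj_symm (hDadjc xm hxmD)) β₁ hβ₁L
    -- choose the colour of c
    set Forbc := (L' c).filter
      (fun y => y = y₀ ∨ ∃ w ∈ O, G.Adj c w ∧ C.M c w y (ψO w)) with hForbc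
    have hForbcCard : Forbc.card ≤ 2 := by
      rw [hForbc, Finset.filter_or]
      refine le_trans (Finset.card_union_le _ _) ?_
      have h1 : (L' c).filter (fun y => y = y₀) ⊆ {y₀} := by
        intro y hy
        rw [Finset.mem_singleton]
        exact (Finset.mem_filter.1 hy).2
      have hOcfilter : O.filter (fun w => G.Adj c w) ⊆ {u₁} := by
        intro z hz
        rcases Finset.mem_filter.1 hz with ⟨hzO, hzadj⟩
        rw [Finset.mem_singleton]
        exact huniq₁ z (hOS hzO) hzadj (hOD z hzO)
      have h2 := forb_card_le C c (L' c) O ψO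
      have h3 := Finset.card_le_card hOcfilter
      have h4 := Finset.card_le_card h1
      simp only [Finset.card_singleton] at h3 h4
      omega
    have hLc : (L' c).card = dS G S p := by rw [htight c hcS]; exact hdall c hcS
    have hFcsub : Forbc ⊆ L' c := by rw [hForbc]; exact Finset.filter_subset _ _
    obtain ⟨φc, hφcm⟩ : ((L' c) \ Forbc).Nonempty := by
      apply Finset.card_pos.1
      have := Finset.card_sdiff_of_subset hFcsub
      omega
    rcases Finset.mem_sdiff.1 hφcm with ⟨hφcL, hφcF⟩
    have hφcny₀ : φc ≠ y₀ := fun h =>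
      hφcF (by rw [hForbc]; exact Finset.mem_filter.2 ⟨hφcL, Or.inl h⟩)
    have hφcO : ∀ w ∈ O, G.Adj c w → ¬ C.M c w φc (ψO w) := fun w hw hadj hM =>
      hφcF (by rw [hForbc]; exact Finset.mem_filter.2 ⟨hφcL, Or.inr ⟨w, hw, hadj, hM⟩⟩)
    have hxmc : xm ≠ c := fun h => hcS2 (h ▸ hxm2)
    have hxmb : xm ≠ b := fun h => hbS2 (h ▸ hxm2)
    -- colour the rest of the clique D
    obtain ⟨ψD, hψD⟩ : ∃ ψ, Proper C (D.erase xm) (fun z => (L' z).filter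
        (fun y => ¬ ∃ w ∈ ({c, xm} : Finset V), G.Adj z w ∧
          C.M z w y (if w = c then φc else β₁))) ψ := by
      apply greedy C (D.erase xm).card _ (le_refl _)
      intro T hT hTne
      obtain ⟨u', hu'T⟩ := hTne
      refine ⟨u', hu'T, ?_⟩
      have hu'S : u' ∈ S := (Finset.mem_sdiff.1 (hDsub (Finset.mem_of_mem_erase (hT hu'T)))).1
      have h1 := forb_card_le C u' (L' u') ({c, xm} : Finset V)
        (fun w => if w = c then φc else β₁)
      have h2 := Finset.card_filter_add_card_filter_not
        (s := L' u') (p := fun y => ∃ w ∈ ({c, xm} : Finset V), G.Adj u' w ∧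
          C.M u' w y (if w = c then φc else β₁))
      have h3 : (({c, xm} : Finset V).filter (fun w => G.Adj u' w)).card ≤ 2 := by
        refine le_trans (Finset.card_le_card (Finset.filter_subset _ _)) ?_
        exact (Finset.card_insert_le _ _).trans (by simp)
      have h4 : (L' u').card = dS G S p := by rw [htight u' hu'S]; exact hdall u' hu'S
      have hTsub : T.erase u' ⊆ (D.erase xm).erase u' := fun z hz =>
        Finset.mem_erase.2 ⟨(Finset.mem_erase.1 hz).1, hT (Finset.mem_of_mem_erase hz)⟩
      have h5 : ((T.erase u').filter (fun w => G.Adj u' w)).card ≤ D.card - 2 := by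
        have e1 : ((D.erase xm).erase u').card = (D.erase xm).card - 1 :=
          Finset.card_erase_of_mem (hT hu'T)
        have e2 : (D.erase xm).card = D.card - 1 := Finset.card_erase_of_mem hxmD
        have e3 : ((T.erase u').filter (fun w => G.Adj u' w)).card ≤
            ((D.erase xm).erase u').card :=
          Finset.card_le_card (Finset.Subset.trans (Finset.filter_subset _ _) hTsub)
        have e4 : 1 ≤ D.card := Finset.card_pos.2 ⟨xm, hxmD⟩
        omega
      omega
    -- the partial colouring (everything but b)
    set φpart : V → ℕ := fun z => if z = c then φc else if z = xm then β₁ else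
      if z ∈ D then ψD z else ψO z with hφpart
    have hφpc : φpart c = φc := by rw [hφpart]; simp
    have hφpxm : φpart xm = β₁ := by rw [hφpart]; simp [hxmc]
    have hφpDR : ∀ z ∈ D.erase xm, φpart z = ψD z := by
      intro z hz
      rcases Finset.mem_erase.1 hz with ⟨hzxm, hzD⟩
      have hzc : z ≠ c := fun h => hcD (h ▸ hzD)
      rw [hφpart]
      simp [hzc, hzxm, hzD]
    have hφpO : ∀ z ∈ O, φpart z = ψO z := by
      intro z hz
      have hzc : z ≠ c := fun h => hcO (h ▸ hz)
      have hzxm : z ≠ xm := fun h => hOD z hz (h ▸ hxmD)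
      have hzD : z ∉ D := hOD z hz
      rw [hφpart]
      simp [hzc, hzxm, hzD]
    -- choose the colour of b
    set Forbb := (L' b).filter
      (fun y => ∃ w ∈ insert u₀ D, G.Adj b w ∧ C.M b w y (φpart w)) with hForbb
    have hForbbCard : Forbb.card ≤ dS G S p - 1 := by
      have hsub : Forbb ⊆ insert x₀ ((L' b).filter
          (fun y => ∃ w ∈ D.erase xm, G.Adj b w ∧ C.M b w y (φpart w))) := by
        intro y hy
        rw [hForbb] at hy
        rcases Finset.mem_filter.1 hy with ⟨hyL, w, hw, hadjw, hM⟩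
        rcases Finset.mem_insert.1 hw with rfl | hwD
        · rw [hφpO w hu₀O] at hM
          exact Finset.mem_insert.2 (Or.inl (C.matching_left _ _ _ _ _ hM hMx₀))
        · by_cases hwxm : w = xm
          · subst hwxm
            rw [hφpxm] at hM
            exact Finset.mem_insert.2 (Or.inl
              (C.matching_left _ _ _ _ _ hM (C.symm _ _ _ _ hMβ₁)))
          · exact Finset.mem_insert.2 (Or.inr (Finset.mem_filter.2
              ⟨hyL, w, Finset.mem_erase.2 ⟨hwxm, hwD⟩, hadjw, hM⟩))
      have h1 := Finset.card_le_card hsub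
      have h2 := Finset.card_insert_le x₀ ((L' b).filter
        (fun y => ∃ w ∈ D.erase xm, G.Adj b w ∧ C.M b w y (φpart w)))
      have h3 := forb_card_le C b (L' b) (D.erase xm) φpart
      have h4 : ((D.erase xm).filter (fun w => G.Adj b w)).card ≤ D.card - 1 := by
        refine le_trans (Finset.card_le_card (Finset.filter_subset _ _)) ?_
        rw [Finset.card_erase_of_mem hxmD]
      omega
    have hLb : (L' b).card = dS G S p := by rw [htight b hbS]; exact hdall b hbS
    have hFbsub : Forbb ⊆ L' b := by rw [hForbb]; exact Finset.filter_subset _ _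
    obtain ⟨φb, hφbm⟩ : ((L' b) \ Forbb).Nonempty := by
      apply Finset.card_pos.1
      have := Finset.card_sdiff_of_subset hFbsub
      omega
    rcases Finset.mem_sdiff.1 hφbm with ⟨hφbL, hφbF⟩
    have hφbno : ∀ w ∈ insert u₀ D, G.Adj b w → ¬ C.M b w φb (φpart w) :=
      fun w hw hadjw hM => hφbF (by
        rw [hForbb]; exact Finset.mem_filter.2 ⟨hφbL, w, hw, hadjw, hM⟩)
    -- no-conflict facts for ψD
    have hψDno : ∀ z ∈ D.erase xm, (¬ C.M z c (ψD z) φc) ∧ (¬ C.M z xm (ψD z) β₁) := by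
      intro z hz
      have hzD := Finset.mem_of_mem_erase hz
      rcases Finset.mem_filter.1 (hψD.1 z hz) with ⟨-, hno⟩
      constructor
      · intro hM
        exact hno ⟨c, Finset.mem_insert_self _ _, G.adj_symm (hDadjc z hzD), by simpa using hM⟩
      · intro hM
        refine hno ⟨xm, Finset.mem_insert_of_mem (Finset.mem_singleton_self _),
          hDclique z hzD xm hxmD (Finset.mem_erase.1 hz).1, ?_⟩
        simpa [hxmc] using hM
    -- assemble
    refine ⟨fun z => if z = b then φb else φpart z, ?_, ?_⟩
    · intro z hz
      dsimp only
      rcases hcases z hz with rfl | rfl | hzD | hzO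
      · rw [if_pos rfl]; exact hφbL
      · rw [if_neg (fun h => hbc h.symm), hφpc]; exact hφcL
      · have hzb : z ≠ b := fun h => hbD (h ▸ hzD)
        rw [if_neg hzb]
        by_cases hzxm : z = xm
        · subst hzxm; rw [hφpxm]; exact hβ₁L
        · rw [hφpDR z (Finset.mem_erase.2 ⟨hzxm, hzD⟩)]
          exact Finset.filter_subset _ _ (hψD.1 z (Finset.mem_erase.2 ⟨hzxm, hzD⟩))
      · have hzb : z ≠ b := fun h => hbO (h ▸ hzO)
        rw [if_neg hzb, hφpO z hzO]
        exact hψO.1 z hzO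
    · intro z hz z' hz' hadj hM
      dsimp only at hM
      rcases hcases z hz with hzeq | hzeq | hzD | hzO
      · -- z = b
        rw [hzeq] at hadj hM
        rw [if_pos rfl] at hM
        rcases hcases z' hz' with hz'eq | hz'eq | hz'D | hz'O
        · rw [hz'eq] at hadj; exact G.irrefl hadj
        · rw [hz'eq] at hadj; exact hnbc hadj
        · have hz'b : z' ≠ b := fun h => hbD (h ▸ hz'D)
          rw [if_neg hz'b] at hM
          exact hφbno z' (Finset.mem_insert_of_mem hz'D) hadj hM
        · have hz'b : z' ≠ b := fun h => hbO (h ▸ hz'O)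
          rw [if_neg hz'b] at hM
          have hz'u₀ : z' = u₀ := huniq₀ z' (hOS hz'O) hadj (hOD z' hz'O)
          rw [hφpO z' hz'O] at hM
          rw [← hφpO z' hz'O] at hM
          exact hφbno z' (by rw [hz'u₀]; exact Finset.mem_insert_self _ _) hadj hM
      · -- z = c
        have hcb : c ≠ b := fun h => hbc h.symm
        rw [hzeq] at hadj hM
        rw [if_neg hcb, hφpc] at hM
        rcases hcases z' hz' with hz'eq | hz'eq | hz'D | hz'O
        · rw [hz'eq] at hadj; exact hnbc (G.adj_symm hadj)
        · rw [hz'eq] at hadj; exact G.irrefl hadj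
        · have hz'b : z' ≠ b := fun h => hbD (h ▸ hz'D)
          rw [if_neg hz'b] at hM
          by_cases hz'xm : z' = xm
          · rw [hz'xm] at hM
            rw [hφpxm] at hM
            rw [hz'xm] at hadj
            exact hφcny₀ (C.matching_left _ _ _ _ _ hM hMy₀)
          · rw [hφpDR z' (Finset.mem_erase.2 ⟨hz'xm, hz'D⟩)] at hM
            exact (hψDno z' (Finset.mem_erase.2 ⟨hz'xm, hz'D⟩)).1 (C.symm _ _ _ _ hM)
        · have hz'b : z' ≠ b := fun h => hbO (h ▸ hz'O)
          rw [if_neg hz'b, hφpO z' hz'O] at hM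
          exact hφcO z' hz'O hadj hM
      · -- z ∈ D
        have hzb : z ≠ b := fun h => hbD (h ▸ hzD)
        rw [if_neg hzb] at hM
        rcases hcases z' hz' with hz'eq | hz'eq | hz'D | hz'O
        · rw [hz'eq] at hadj hM
          rw [if_pos rfl] at hM
          exact hφbno z (Finset.mem_insert_of_mem hzD) (G.adj_symm hadj) (C.symm _ _ _ _ hM)
        · have hcb : c ≠ b := fun h => hbc h.symm
          rw [hz'eq] at hadj hM
          rw [if_neg hcb, hφpc] at hM
          by_cases hzxm : z = xm
          · rw [hzxm] at hM
            rw [hφpxm] at hM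
            exact hφcny₀ (C.matching_left _ _ _ _ _ (C.symm _ _ _ _ hM) hMy₀)
          · rw [hφpDR z (Finset.mem_erase.2 ⟨hzxm, hzD⟩)] at hM
            exact (hψDno z (Finset.mem_erase.2 ⟨hzxm, hzD⟩)).1 hM
        · have hz'b : z' ≠ b := fun h => hbD (h ▸ hz'D)
          rw [if_neg hz'b] at hM
          by_cases hzxm : z = xm
          · rw [hzxm] at hM hadj
            rw [hφpxm] at hM
            by_cases hz'xm : z' = xm
            · rw [hz'xm] at hadj; exact G.irrefl hadj
            · rw [hφpDR z' (Finset.mem_erase.2 ⟨hz'xm, hz'D⟩)] at hM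
              exact (hψDno z' (Finset.mem_erase.2 ⟨hz'xm, hz'D⟩)).2 (C.symm _ _ _ _ hM)
          · rw [hφpDR z (Finset.mem_erase.2 ⟨hzxm, hzD⟩)] at hM
            by_cases hz'xm : z' = xm
            · rw [hz'xm] at hM hadj
              rw [hφpxm] at hM
              exact (hψDno z (Finset.mem_erase.2 ⟨hzxm, hzD⟩)).2 hM
            · rw [hφpDR z' (Finset.mem_erase.2 ⟨hz'xm, hz'D⟩)] at hM
              exact hψD.2 z (Finset.mem_erase.2 ⟨hzxm, hzD⟩) z'
                (Finset.mem_erase.2 ⟨hz'xm, hz'D⟩) hadj hM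
        · exact hno_OD z' hz'O z hzD (G.adj_symm hadj)
      · -- z ∈ O
        have hzb : z ≠ b := fun h => hbO (h ▸ hzO)
        rw [if_neg hzb, hφpO z hzO] at hM
        rcases hcases z' hz' with hz'eq | hz'eq | hz'D | hz'O
        · rw [hz'eq] at hadj hM
          rw [if_pos rfl] at hM
          have hzu₀ : z = u₀ := huniq₀ z (hOS hzO) (G.adj_symm hadj) (hOD z hzO)
          have hM' := C.symm _ _ _ _ hM
          rw [← hφpO z hzO] at hM'
          exact hφbno z (by rw [hzu₀]; exact Finset.mem_insert_self _ _) (G.adj_symm hadj) hM'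
        · have hcb : c ≠ b := fun h => hbc h.symm
          rw [hz'eq] at hadj hM
          rw [if_neg hcb, hφpc] at hM
          exact hφcO z hzO (G.adj_symm hadj) (C.symm _ _ _ _ hM)
        · exact hno_OD z hzO z' hz'D hadj
        · have hz'b : z' ≠ b := fun h => hbO (h ▸ hz'O)
          rw [if_neg hz'b, hφpO z' hz'O] at hM
          exact hψO.2 z hzO z' hz'O hadj hM

lemma key (C : Cover G) : ∀ (n : ℕ) (S : Finset V), S.card ≤ n → ∀ (L' : V → Finset ℕ),
    (∀ u ∈ S, ∀ v ∈ S, Reach G ↑S u v) →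
    (∀ v ∈ S, dS G S v ≤ (L' v).card) →
    ((∃ v ∈ S, dS G S v < (L' v).card) ∨ ∃ B : Set V, BadIn G S B) →
    ∃ φ, Proper C S L' φ := by
  intro n
  induction n with
  | zero =>
      intro S hS L' _ _ _
      have : S = ∅ := Finset.card_eq_zero.1 (Nat.le_zero.1 hS)
      subst this
      exact ⟨fun _ => 0, fun v hv => absurd hv (Finset.notMem_empty v),
        fun u hu => absurd hu (Finset.notMem_empty u)⟩
  | succ n ih =>
      intro S hS L' hconn hge hbad
      rcases hbad with ⟨v₀, hv₀, hsur⟩ | ⟨B, hB⟩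
      · -- surplus case: plain greedy
        apply greedy C (n+1) S hS L'
        intro T hT hTne
        by_cases hvT : v₀ ∈ T
        · refine ⟨v₀, hvT, ?_⟩
          calc ((T.erase v₀).filter (fun w => G.Adj v₀ w)).card
              ≤ (S.filter (fun w => G.Adj v₀ w)).card := by
                apply Finset.card_le_card
                intro z hz
                rcases Finset.mem_filter.1 hz with ⟨hz1, hz2⟩
                exact Finset.mem_filter.2 ⟨hT (Finset.mem_of_mem_erase hz1), hz2⟩
            _ < (L' v₀).card := hsur
        · obtain ⟨u, hu, w, hw, hwT, hadj⟩ :=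
            exists_boundary (fun z hz => hconn z hz v₀ hv₀) hT hvT hTne
          exact ⟨u, hu, lt_of_lt_of_le (card_lt_of_out hT hw hwT hadj) (hge u (hT hu))⟩
      · -- bad block case
        obtain ⟨hBsub, hBconn, hBncv, hBmax, hBncp, hBncy⟩ := hB
        by_cases hsur : ∃ v ∈ S, dS G S v < (L' v).card
        · rcases hsur with ⟨v₀, hv₀, h⟩
          apply greedy C (n+1) S hS L'
          intro T hT hTne
          by_cases hvT : v₀ ∈ T
          · refine ⟨v₀, hvT, ?_⟩
            calc ((T.erase v₀).filter (fun w => G.Adj v₀ w)).card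
                ≤ (S.filter (fun w => G.Adj v₀ w)).card := by
                  apply Finset.card_le_card
                  intro z hz
                  rcases Finset.mem_filter.1 hz with ⟨hz1, hz2⟩
                  exact Finset.mem_filter.2 ⟨hT (Finset.mem_of_mem_erase hz1), hz2⟩
              _ < (L' v₀).card := h
          · obtain ⟨u, hu, w, hw, hwT, hadj⟩ :=
              exists_boundary (fun z hz => hconn z hz v₀ hv₀) hT hvT hTne
            exact ⟨u, hu, lt_of_lt_of_le (card_lt_of_out hT hw hwT hadj) (hge u (hT hu))⟩
        push_neg at hsur
        have htight : ∀ v ∈ S, (L' v).card = dS G S v :=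
          fun v hv => le_antisymm (hsur v hv) (hge v hv)
        by_cases hcut : ∀ v ∈ S, ∀ x ∈ S.erase v, ∀ y ∈ S.erase v, Reach G ↑(S.erase v) x y
        · -- no cut vertex: B = S, two-connected case
          have hBS : (↑S : Set V) = B := by
            apply hBmax ↑S (le_refl _) hBsub
            · rw [connected_induce_iff]
              refine ⟨?_, fun u hu v hv => hconn u (by exact_mod_cast hu) v (by exact_mod_cast hv)⟩
              obtain ⟨p, hp⟩ : B.Nonempty := by
                rcases B.eq_empty_or_nonempty with rfl | h
                · exact absurd (fun u hu => absurd hu (Set.notMem_empty u)) hBncp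
                · exact h
              exact ⟨p, hBsub hp⟩
            · intro v hv
              rw [preconnected_induce_iff]
              intro x hx y hy
              have hv' : v ∈ S := by exact_mod_cast hv
              have hx' : x ∈ S.erase v := by
                rcases hx with ⟨hx1, hx2⟩
                exact Finset.mem_erase.2 ⟨by simpa using hx2, by exact_mod_cast hx1⟩
              have hy' : y ∈ S.erase v := by
                rcases hy with ⟨hy1, hy2⟩
                exact Finset.mem_erase.2 ⟨by simpa using hy2, by exact_mod_cast hy1⟩
              have := hcut v hv' x hx' y hy'
              have hco : (↑(S.erase v) : Set V) = ↑S \ {v} := by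
                rw [Finset.coe_erase]
              rwa [hco] at this
          refine twoconn C S L' hconn hcut htight ?_ ?_
          · rw [hBS]; exact hBncp
          · rw [hBS]; exact hBncy
        · -- cut vertex case
          push_neg at hcut
          obtain ⟨v, hv, x0, hx0, y0, hy0, hnr⟩ := hcut
          set S' := S.erase v with hS'def
          have hcoeS' : (↑S' : Set V) = ↑S \ {v} := by rw [hS'def, Finset.coe_erase]
          obtain ⟨p, hp, q, hq, hpq, hnadj⟩ :
              ∃ p ∈ B, ∃ q ∈ B, p ≠ q ∧ ¬ G.Adj p q := by
            by_contra h
            push_neg at h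
            exact hBncp h
          set b₀ := if p = v then q else p with hb₀def
          have hb₀B : b₀ ∈ B := by
            rw [hb₀def]; split <;> assumption
          have hb₀v : b₀ ≠ v := by
            rw [hb₀def]; split
            · rename_i h; rw [← h]; exact fun hh => hpq hh.symm
            · assumption
          have hb₀S : b₀ ∈ S := by exact_mod_cast hBsub hb₀B
          have hb₀S' : b₀ ∈ S' := Finset.mem_erase.2 ⟨hb₀v, hb₀S⟩
          set C₀ := S'.filter (fun z => Reach G ↑S' b₀ z) with hC₀def
          have hC₀S' : C₀ ⊆ S' := Finset.filter_subset _ _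
          have hC₀S : C₀ ⊆ S := hC₀S'.trans (Finset.erase_subset _ _)
          have hvC₀ : v ∉ C₀ := fun h => (Finset.mem_erase.1 (hC₀S' h)).1 rfl
          have hb₀C₀ : b₀ ∈ C₀ := Finset.mem_filter.2 ⟨hb₀S', .refl⟩
          have hreachb₀ : ∀ z ∈ C₀, Reach G ↑S' b₀ z :=
            fun z hz => (Finset.mem_filter.1 hz).2
          have hcl1 : ∀ a ∈ C₀, ∀ w ∈ S', G.Adj a w → w ∈ C₀ := by
            intro a ha w hw haw
            exact Finset.mem_filter.2 ⟨hw, (hreachb₀ a ha).tail ⟨by exact_mod_cast hw, haw⟩⟩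
          have hBC₀ : ∀ z ∈ B, z ≠ v → z ∈ C₀ := by
            intro z hz hzv
            have hzS : z ∈ S := by exact_mod_cast hBsub hz
            have hzS' : z ∈ S' := Finset.mem_erase.2 ⟨hzv, hzS⟩
            refine Finset.mem_filter.2 ⟨hzS', ?_⟩
            by_cases hvB : v ∈ B
            · have hpre := hBncv v hvB
              rw [preconnected_induce_iff] at hpre
              have hr := hpre b₀ ⟨hb₀B, by simpa using hb₀v⟩ z ⟨hz, by simpa using hzv⟩
              refine hr.mono ?_
              rw [hcoeS']
              intro a ⟨ha1, ha2⟩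
              exact ⟨by exact_mod_cast hBsub ha1, ha2⟩
            · have hr := ((connected_induce_iff.1 hBconn).2) b₀ hb₀B z hz
              refine hr.mono ?_
              rw [hcoeS']
              intro a ha
              exact ⟨by exact_mod_cast hBsub ha, fun hav => hvB (by rwa [← hav] at * <;> exact ha)⟩
          have hex_out : ∃ y₁ ∈ S', y₁ ∉ C₀ := by
            by_contra h
            push_neg at h
            have hx0C : x0 ∈ C₀ := h x0 hx0
            have hy0C : y0 ∈ C₀ := h y0 hy0
            exact hnr (((hreachb₀ x0 hx0C).symm (by exact_mod_cast hb₀S')).trans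
              (hreachb₀ y0 hy0C))
          obtain ⟨y₁, hy₁S', hy₁C₀⟩ := hex_out
          have hnbrC₀ : ∀ (X : Finset V), X ⊆ S' → (∀ a ∈ X, ∀ w ∈ S', G.Adj a w → w ∈ X) →
              ∀ z₀ ∈ X, ∀ yy ∈ S, yy ∉ X → ∃ w ∈ X, G.Adj v w := by
            intro X hXS' hXcl z₀ hz₀ yy hyyS hyyX
            by_contra hno
            push_neg at hno
            have hcl : ∀ a ∈ (↑X : Set V), ∀ b ∈ (↑S : Set V), G.Adj a b → b ∈ (↑X : Set V) := by
              intro a ha b hb hab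
              by_cases hbv : b = v
              · subst hbv
                exact absurd (G.adj_symm hab) (hno a (by exact_mod_cast ha))
              · have : b ∈ S' := Finset.mem_erase.2 ⟨hbv, by exact_mod_cast hb⟩
                exact_mod_cast hXcl a (by exact_mod_cast ha) b this hab
            have := Reach.closed hcl (by exact_mod_cast hz₀)
              (hconn z₀ (hXS'.trans (Finset.erase_subset _ _) hz₀) yy hyyS)
            exact hyyX (by exact_mod_cast this)
          obtain ⟨w₀, hw₀C₀, hw₀adj⟩ :=
            hnbrC₀ C₀ hC₀S' hcl1 b₀ hb₀C₀ y₁ (Finset.erase_subset _ _ hy₁S') hy₁C₀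
          set S₂ := insert v C₀ with hS₂def
          set S₁ := S \ C₀ with hS₁def
          have hS₂S : S₂ ⊆ S := by
            intro z hz
            rcases Finset.mem_insert.1 hz with rfl | hz
            · exact hv
            · exact hC₀S hz
          have hvS₁ : v ∈ S₁ := Finset.mem_sdiff.2 ⟨hv, hvC₀⟩
          have hS₁S : S₁ ⊆ S := Finset.sdiff_subset
          have hy₁S : y₁ ∈ S := Finset.erase_subset _ _ hy₁S'
          have hy₁S₂ : y₁ ∉ S₂ := by
            intro h
            rcases Finset.mem_insert.1 h with rfl | h
            · exact (Finset.mem_erase.1 hy₁S').1 rfl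
            · exact hy₁C₀ h
          have hcard₂ : S₂.card ≤ n := by
            have h1 : S₂ ⊂ S := ⟨hS₂S, fun h => hy₁S₂ (h hy₁S)⟩
            have := Finset.card_lt_card h1
            omega
          have hreachC₀ : ∀ u ∈ C₀, ∀ w ∈ C₀, Reach G ↑C₀ u w := by
            intro u hu w hw
            have h1 : Reach G ↑S' u w :=
              ((hreachb₀ u hu).symm (by exact_mod_cast hb₀S')).trans (hreachb₀ w hw)
            refine h1.restrict ?_ (by exact_mod_cast hu)
            intro a ha b hb hab
            exact_mod_cast hcl1 a (by exact_mod_cast ha) b (by exact_mod_cast hb) hab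
          have h2v : ∀ u ∈ S₂, Reach G ↑S₂ u v := by
            intro u hu
            rcases Finset.mem_insert.1 hu with rfl | hu
            · exact .refl
            · have h1 : Reach G ↑S₂ u w₀ := (hreachC₀ u hu w₀ hw₀C₀).mono
                (by intro a ha; exact_mod_cast Finset.mem_insert_of_mem (by exact_mod_cast ha))
              exact h1.tail ⟨by exact_mod_cast Finset.mem_insert_self v C₀, G.adj_symm hw₀adj⟩
          have hconn₂ : ∀ u ∈ S₂, ∀ w ∈ S₂, Reach G ↑S₂ u w := by
            intro u hu w hw
            exact (h2v u hu).trans ((h2v w hw).symm (by exact_mod_cast hw))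
          have h1v : ∀ z ∈ S₁, Reach G ↑S₁ z v := by
            intro z hz
            by_cases hzv : z = v
            · subst hzv; exact .refl
            have hzS : z ∈ S := hS₁S hz
            have hzS' : z ∈ S' := Finset.mem_erase.2 ⟨hzv, hzS⟩
            have hzC₀ : z ∉ C₀ := (Finset.mem_sdiff.1 hz).2
            set Cz := S'.filter (fun w => Reach G ↑S' z w) with hCzdef
            have hCzS' : Cz ⊆ S' := Finset.filter_subset _ _
            have hzCz : z ∈ Cz := Finset.mem_filter.2 ⟨hzS', .refl⟩
            have hreachz : ∀ w ∈ Cz, Reach G ↑S' z w := fun w hw => (Finset.mem_filter.1 hw).2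
            have hclz : ∀ a ∈ Cz, ∀ w ∈ S', G.Adj a w → w ∈ Cz := by
              intro a ha w hw haw
              exact Finset.mem_filter.2 ⟨hw, (hreachz a ha).tail ⟨by exact_mod_cast hw, haw⟩⟩
            have hdisj : ∀ w ∈ Cz, w ∉ C₀ := by
              intro w hw hwC₀
              apply hzC₀
              refine Finset.mem_filter.2 ⟨hzS', ?_⟩
              have h1 : Reach G ↑S' z b₀ :=
                (hreachz w hw).trans ((hreachb₀ w hwC₀).symm (by exact_mod_cast hb₀S'))
              exact h1.symm (by exact_mod_cast hzS')
            have hb₀Cz : b₀ ∉ Cz := fun h => (hdisj b₀ h) hb₀C₀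
            obtain ⟨w₁, hw₁Cz, hw₁adj⟩ := hnbrC₀ Cz hCzS' hclz z hzCz b₀ hb₀S hb₀Cz
            have hCzS₁ : Cz ⊆ S₁ := by
              intro a ha
              exact Finset.mem_sdiff.2 ⟨Finset.erase_subset _ _ (hCzS' ha), hdisj a ha⟩
            have hreachCz : Reach G ↑Cz z w₁ := by
              refine (hreachz w₁ hw₁Cz).restrict ?_ (by exact_mod_cast hzCz)
              intro a ha b hb hab
              exact_mod_cast hclz a (by exact_mod_cast ha) b (by exact_mod_cast hb) hab
            have h1 : Reach G ↑S₁ z w₁ := hreachCz.mono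
              (by intro a ha; exact_mod_cast hCzS₁ (by exact_mod_cast ha))
            exact h1.tail ⟨by exact_mod_cast hvS₁, G.adj_symm hw₁adj⟩
          have hconn₁ : ∀ u ∈ S₁, ∀ w ∈ S₁, Reach G ↑S₁ u w := by
            intro u hu w hw
            exact (h1v u hu).trans ((h1v w hw).symm (by exact_mod_cast hw))
          have hedge : ∀ a ∈ C₀, ∀ b ∈ S, G.Adj a b → b ∈ S₂ := by
            intro a ha b hb hab
            by_cases hbv : b = v
            · subst hbv; exact Finset.mem_insert_self _ _
            · exact Finset.mem_insert_of_mem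
                (hcl1 a ha b (Finset.mem_erase.2 ⟨hbv, hb⟩) hab)
          have hdeq₁ : ∀ z ∈ S₁, z ≠ v → dS G S z = dS G S₁ z := by
            intro z hz hzv
            unfold dS
            congr 1
            apply Finset.ext
            intro w
            simp only [Finset.mem_filter]
            constructor
            · rintro ⟨hwS, hadj⟩
              refine ⟨Finset.mem_sdiff.2 ⟨hwS, ?_⟩, hadj⟩
              intro hwC₀
              have := hedge w hwC₀ z (hS₁S hz) (G.adj_symm hadj)
              rcases Finset.mem_insert.1 this with rfl | h
              · exact hzv rfl
              · exact (Finset.mem_sdiff.1 hz).2 h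
            · rintro ⟨hwS₁, hadj⟩
              exact ⟨hS₁S hwS₁, hadj⟩
          have hdeq₂ : ∀ u ∈ C₀, dS G S u = dS G S₂ u := by
            intro u hu
            unfold dS
            congr 1
            apply Finset.ext
            intro w
            simp only [Finset.mem_filter]
            constructor
            · rintro ⟨hwS, hadj⟩
              exact ⟨hedge u hu w hwS hadj, hadj⟩
            · rintro ⟨hwS₂, hadj⟩
              exact ⟨hS₂S hwS₂, hadj⟩
          set t := (C₀.filter (fun w => G.Adj v w)).card with htdef
          have hsplit : dS G S v = dS G S₁ v + t := by
            unfold dS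
            rw [htdef]
            rw [← Finset.card_union_of_disjoint]
            · congr 1
              rw [← Finset.filter_union]
              congr 1
              rw [hS₁def, Finset.sdiff_union_of_subset hC₀S]
            · exact Finset.disjoint_filter_filter
                (Finset.sdiff_disjoint)
          have ht1 : 1 ≤ t := by
            rw [htdef]
            exact Finset.card_pos.2 ⟨w₀, Finset.mem_filter.2 ⟨hw₀C₀, hw₀adj⟩⟩
          set Sψ := S₁.erase v with hSψdef
          obtain ⟨ψ, hψ⟩ : ∃ ψ, Proper C Sψ L' ψ := by
            apply greedy C (n+1) Sψ (le_trans (Finset.card_le_card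
              ((Finset.erase_subset _ _).trans hS₁S)) hS) L'
            intro T hT hTne
            have hTS₁ : T ⊆ S₁ := hT.trans (Finset.erase_subset _ _)
            have hvT : v ∉ T := fun h => (Finset.mem_erase.1 (hT h)).1 rfl
            obtain ⟨u, hu, w, hw, hwT, hadj⟩ :=
              exists_boundary (fun z hz => h1v z hz) hTS₁ hvT hTne
            refine ⟨u, hu, ?_⟩
            have huv : u ≠ v := (Finset.mem_erase.1 (hT hu)).1
            have h2 := card_lt_of_out hTS₁ hw hwT hadj
            rw [← hdeq₁ u (hTS₁ hu) huv] at h2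
            rw [htight u (hS₁S (hTS₁ hu))]
            exact h2
          set Bad := (L' v).filter (fun k => ∃ w ∈ Sψ, G.Adj v w ∧ C.M v w k (ψ w)) with hBaddef
          have hBadcard : Bad.card ≤ dS G S₁ v := by
            calc Bad.card ≤ (Sψ.filter (fun w => G.Adj v w)).card := forb_card_le C v (L' v) Sψ ψ
              _ ≤ dS G S₁ v := Finset.card_le_card
                  (Finset.filter_subset_filter _ (Finset.erase_subset _ _))
          set K := (L' v) \ Bad with hKdef
          have hKsub : K ⊆ L' v := Finset.sdiff_subset
          have hKcard : t ≤ K.card := by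
            have h1 : K.card = (L' v).card - Bad.card :=
              Finset.card_sdiff_of_subset (Finset.filter_subset _ _)
            have h2 := htight v hv
            omega
          set L'' := Function.update L' v K with hL''def
          have hL''v : L'' v = K := by rw [hL''def]; exact Function.update_self _ _ _
          have hL''o : ∀ u, u ≠ v → L'' u = L' u := by
            intro u hu; rw [hL''def]; exact Function.update_of_ne hu _ _
          have hdS₂v : dS G S₂ v = t := by
            unfold dS
            rw [htdef]
            congr 1
            apply Finset.ext
            intro w
            rw [hS₂def]
            simp only [Finset.mem_filter, Finset.mem_insert]
            constructor
            · rintro ⟨rfl | hw, hadj⟩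
              · exact absurd hadj (G.irrefl)
              · exact ⟨hw, hadj⟩
            · rintro ⟨hw, hadj⟩
              exact ⟨Or.inr hw, hadj⟩
          obtain ⟨φ₂, hφ₂⟩ : ∃ φ₂, Proper C S₂ L'' φ₂ := by
            apply ih S₂ hcard₂ L'' hconn₂
            · intro u hu
              rcases Finset.mem_insert.1 hu with rfl | hu
              · rw [hL''v, hdS₂v]; exact hKcard
              · rw [hL''o u (fun h => hvC₀ (h ▸ hu)), ← hdeq₂ u hu]
                exact hge u (hC₀S hu)
            · by_cases hsur₂ : t < K.card
              · exact Or.inl ⟨v, Finset.mem_insert_self _ _, by rw [hL''v, hdS₂v]; exact hsur₂⟩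
              · refine Or.inr ⟨B, ?_, hBconn, hBncv, ?_, hBncp, hBncy⟩
                · intro z hz
                  by_cases hzv : z = v
                  · subst hzv; exact_mod_cast Finset.mem_insert_self _ _
                  · exact_mod_cast Finset.mem_insert_of_mem (hBC₀ z hz hzv)
                · intro B' hB'sub hBB' hB'conn hB'ncv
                  refine hBmax B' ?_ hBB' hB'conn hB'ncv
                  intro a ha
                  exact_mod_cast hS₂S (by exact_mod_cast hB'sub ha)
          refine ⟨fun z => if z ∈ S₂ then φ₂ z else ψ z, ?_, ?_⟩
          · intro z hz
            by_cases hz₂ : z ∈ S₂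
            · simp only [if_pos hz₂]
              rcases Finset.mem_insert.1 hz₂ with rfl | hzC₀
              · exact hKsub (hL''v ▸ hφ₂.1 z hz₂)
              · have := hφ₂.1 z hz₂
                rwa [hL''o z (fun h => hvC₀ (h ▸ hzC₀))] at this
            · simp only [if_neg hz₂]
              apply hψ.1
              refine Finset.mem_erase.2 ⟨fun h => hz₂ (h ▸ Finset.mem_insert_self _ _), ?_⟩
              exact Finset.mem_sdiff.2 ⟨hz, fun h => hz₂ (Finset.mem_insert_of_mem h)⟩
          · intro a ha b hb hab hM
            dsimp only at hM
            have hmemψ : ∀ z ∈ S, z ∉ S₂ → z ∈ Sψ := by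
              intro z hz hz₂
              refine Finset.mem_erase.2 ⟨fun h => hz₂ (h ▸ Finset.mem_insert_self _ _), ?_⟩
              exact Finset.mem_sdiff.2 ⟨hz, fun h => hz₂ (Finset.mem_insert_of_mem h)⟩
            by_cases ha₂ : a ∈ S₂ <;> by_cases hb₂ : b ∈ S₂
            · rw [if_pos ha₂, if_pos hb₂] at hM
              exact hφ₂.2 a ha₂ b hb₂ hab hM
            · rw [if_pos ha₂, if_neg hb₂] at hM
              rcases Finset.mem_insert.1 ha₂ with rfl | haC₀
              · have hbψ := hmemψ b hb hb₂
                have hK : φ₂ a ∈ K := hL''v ▸ hφ₂.1 a ha₂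
                rcases Finset.mem_sdiff.1 hK with ⟨hL, hnB⟩
                exact hnB (Finset.mem_filter.2 ⟨hL, b, hbψ, hab, hM⟩)
              · exact hb₂ (hedge a haC₀ b hb hab)
            · rw [if_neg ha₂, if_pos hb₂] at hM
              rcases Finset.mem_insert.1 hb₂ with rfl | hbC₀
              · have haψ := hmemψ a ha ha₂
                have hK : φ₂ b ∈ K := hL''v ▸ hφ₂.1 b hb₂
                rcases Finset.mem_sdiff.1 hK with ⟨hL, hnB⟩
                exact hnB (Finset.mem_filter.2 ⟨hL, a, haψ, G.adj_symm hab,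
                  C.symm _ _ _ _ hM⟩)
              · exact ha₂ (hedge b hbC₀ a ha (G.adj_symm hab))
            · rw [if_neg ha₂, if_neg hb₂] at hM
              exact hψ.2 a (hmemψ a ha ha₂) b (hmemψ b hb hb₂) hab hM

lemma reach_univ {V : Type*} [Fintype V] {G : SimpleGraph V} {u v : V}
    (h : G.Reachable u v) : Reach G ↑(Finset.univ : Finset V) u v := by
  obtain ⟨w⟩ := h
  induction w with
  | nil => exact .refl
  | cons h p ih =>
      exact Relation.ReflTransGen.head ⟨by simp, h⟩ ih

end DP


/-- If `G` is a connected graph and `(L, M)` is a cover with `|L(v)| ≥ deg v` for all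
`v`, and it is not the case that `|L(v)| = deg v` for every `v` with `G` a GDP-tree,
then `G` has an `(L, M)`-colouring. -/
theorem stmt_6 {V : Type*} [Fintype V] (G : SimpleGraph V) (hconn : G.Connected)
    (C : Cover G) (hL : ∀ v, deg G v ≤ (C.L v).card)
    (hnot : ¬ ((∀ v, (C.L v).card = deg G v) ∧ IsGDPTree G)) :
    ∃ φ : V → ℕ, C.IsColouring φ := by
  classical
  have hdeg : ∀ v, DP.dS G Finset.univ v = deg G v := by
    intro v
    unfold DP.dS deg
    have h : G.neighborSet v = ↑(Finset.univ.filter (fun w => G.Adj v w)) := by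
      ext w; simp [SimpleGraph.mem_neighborSet]
    rw [h, Set.ncard_coe_finset]
  have hbad : (∃ v ∈ Finset.univ, DP.dS G Finset.univ v < (C.L v).card) ∨
      ∃ B : Set V, DP.BadIn G Finset.univ B := by
    by_cases htight : ∀ v, (C.L v).card = deg G v
    · right
      have hgdp : ¬ IsGDPTree G := fun h => hnot ⟨htight, h⟩
      have : ∃ B : Set V, IsBlock G B ∧ ¬ (IsCompleteSet G B ∨ IsCycleSet G B) := by
        by_contra h
        push_neg at h
        exact hgdp ⟨hconn, fun B hB => h B hB⟩
      obtain ⟨B, ⟨hB1, hB2, hB3⟩, hB4⟩ := this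
      push_neg at hB4
      exact ⟨B, Set.subset_univ _ |>.trans (by simp), hB1, hB2,
        fun B' _ hBB' hB'c hB'n => hB3 B' hBB' hB'c hB'n, hB4.1, hB4.2⟩
    · left
      push_neg at htight
      obtain ⟨v, hv⟩ := htight
      exact ⟨v, Finset.mem_univ v, by
        rw [hdeg v]
        exact lt_of_le_of_ne (hL v) (Ne.symm hv)⟩
  obtain ⟨φ, hφ⟩ := DP.key C (Finset.univ.card) Finset.univ (le_refl _) C.L
    (fun u _ v _ => DP.reach_univ (hconn u v))
    (fun v _ => by rw [hdeg v]; exact hL v) hbad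
  exact ⟨φ, fun v => hφ.1 v (Finset.mem_univ v),
    fun u v huv => hφ.2 u (Finset.mem_univ u) v (Finset.mem_univ v) huv⟩
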